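/- arXiv:math/9808137 — 6 statements merged into one kernel-verified Lean document; each statement's English description precedes it below -/
import Mathlib

section
/- Let Θ₀, Θ₁ : U → ℂ be holomorphic on an open set U ⊆ ℂ⁴. Then the Lax pair commutes, i.e. [L₀(λ), L₁(λ)] = 0 on U for every λ ∈ ℂ, if and only if the pair (Θ₀,Θ₁) satisfies the hyper-Hermitian equation E₀ = E₁ = 0 on U. -/
noncomputable section

/-- Points of `ℂ⁴`, with coordinates `p = (x, y, w, z)`. -/
abbrev V4 : Type := ℂ × ℂ × ℂ × ℂ

/-- Coordinate directions. -/
def eX : V4 := (1, 0, 0, 0)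
def eY : V4 := (0, 1, 0, 0)
def eW : V4 := (0, 0, 1, 0)
def eZ : V4 := (0, 0, 0, 1)

/-- Directional (partial) derivative of `f` along the constant direction `v`. -/
def pd (v : V4) (f : V4 → ℂ) : V4 → ℂ := fun p => fderiv ℂ f p v

/-- The hyper-Hermitian expression
`E_C = ∂²Θ_C/∂x∂w + ∂²Θ_C/∂y∂z + (∂Θ₀/∂x − ∂Θ₁/∂y)·∂²Θ_C/∂x∂y
      + (∂Θ₁/∂x)·∂²Θ_C/∂y² − (∂Θ₀/∂y)·∂²Θ_C/∂x²`. -/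
def hhE (Θ0 Θ1 ΘC : V4 → ℂ) : V4 → ℂ := fun p =>
  pd eX (pd eW ΘC) p + pd eY (pd eZ ΘC) p
    + (pd eX Θ0 p - pd eY Θ1 p) * pd eX (pd eY ΘC) p
    + pd eX Θ1 p * pd eY (pd eY ΘC) p
    - pd eY Θ0 p * pd eX (pd eX ΘC) p

/-- Lie bracket of vector fields on `ℂ⁴`, identified with maps `V4 → V4`:
`[V,W] := (DW)V − (DV)W`. -/
def bracket (Vf Wf : V4 → V4) : V4 → V4 := fun p =>
  fderiv ℂ Wf p (Vf p) - fderiv ℂ Vf p (Wf p)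

/-- `∇₀₀′ = ∂/∂y`. -/
def nab00 : V4 → V4 := fun _ => eY

/-- `∇₁₀′ = −∂/∂x`. -/
def nab10 : V4 → V4 := fun _ => -eX

/-- `∇₀₁′ = ∂/∂w − (∂Θ₁/∂y)·∂/∂y − (∂Θ₀/∂y)·∂/∂x`. -/
def nab01 (Θ0 Θ1 : V4 → ℂ) : V4 → V4 := fun p =>
  eW - pd eY Θ1 p • eY - pd eY Θ0 p • eX

/-- `∇₁₁′ = ∂/∂z + (∂Θ₁/∂x)·∂/∂y + (∂Θ₀/∂x)·∂/∂x`. -/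
def nab11 (Θ0 Θ1 : V4 → ℂ) : V4 → V4 := fun p =>
  eZ + pd eX Θ1 p • eY + pd eX Θ0 p • eX

/-- The Lax pair `L₀(λ) := ∇₀₀′ − λ∇₀₁′`. -/
def lax0 (Θ0 Θ1 : V4 → ℂ) (lam : ℂ) : V4 → V4 := fun p =>
  nab00 p - lam • nab01 Θ0 Θ1 p

/-- The Lax pair `L₁(λ) := ∇₁₀′ − λ∇₁₁′`. -/
def lax1 (Θ0 Θ1 : V4 → ℂ) (lam : ℂ) : V4 → V4 := fun p =>
  nab10 p - lam • nab11 Θ0 Θ1 p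


lemma analyticAt_pd {f : V4 → ℂ} {p : V4} (hf : AnalyticAt ℂ f p) (v : V4) :
    AnalyticAt ℂ (pd v f) p :=
  ((ContinuousLinearMap.apply ℂ ℂ v).analyticAt (fderiv ℂ f p)).comp hf.fderiv

lemma fderiv_pd {f : V4 → ℂ} {p : V4} (hf : AnalyticAt ℂ f p) (v w : V4) :
    fderiv ℂ (pd w f) p v = fderiv ℂ (fderiv ℂ f) p v w := by
  have hd : DifferentiableAt ℂ (fderiv ℂ f) p := hf.fderiv.differentiableAt
  have h : pd w f = fun q => (fderiv ℂ f q) w := rfl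
  rw [h, fderiv_clm_apply hd (differentiableAt_const w)]
  simp

lemma pd_comm {f : V4 → ℂ} {p : V4} (hf : AnalyticAt ℂ f p) (v w : V4) :
    pd v (pd w f) p = pd w (pd v f) p := by
  have h := (hf.contDiffAt (n := 2)).isSymmSndFDerivAt (by simp [minSmoothness_of_isRCLikeNormedField])
  show fderiv ℂ (pd w f) p v = fderiv ℂ (pd v f) p w
  rw [fderiv_pd hf, fderiv_pd hf]
  exact h v w

lemma fderiv_lax0_apply {Θ0 Θ1 : V4 → ℂ} {p : V4}
    (h0 : AnalyticAt ℂ Θ0 p) (h1 : AnalyticAt ℂ Θ1 p) (lam : ℂ) (v : V4) :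
    fderiv ℂ (lax0 Θ0 Θ1 lam) p v
      = lam • (fderiv ℂ (pd eY Θ1) p v • eY + fderiv ℂ (pd eY Θ0) p v • eX) := by
  have d1 : HasFDerivAt (fun q => pd eY Θ1 q • eY) ((fderiv ℂ (pd eY Θ1) p).smulRight eY) p :=
    (analyticAt_pd h1 eY).differentiableAt.hasFDerivAt.smul_const eY
  have d0 : HasFDerivAt (fun q => pd eY Θ0 q • eX) ((fderiv ℂ (pd eY Θ0) p).smulRight eX) p :=
    (analyticAt_pd h0 eY).differentiableAt.hasFDerivAt.smul_const eX
  have dinner : HasFDerivAt (fun q => eW - pd eY Θ1 q • eY - pd eY Θ0 q • eX)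
      (0 - (fderiv ℂ (pd eY Θ1) p).smulRight eY - (fderiv ℂ (pd eY Θ0) p).smulRight eX) p :=
    ((hasFDerivAt_const eW p).sub d1).sub d0
  have dL : HasFDerivAt (lax0 Θ0 Θ1 lam)
      (0 - lam • (0 - (fderiv ℂ (pd eY Θ1) p).smulRight eY
        - (fderiv ℂ (pd eY Θ0) p).smulRight eX)) p :=
    (hasFDerivAt_const eY p).sub (dinner.const_smul lam)
  rw [dL.fderiv]
  simp [smul_sub]
  module

lemma fderiv_lax1_apply {Θ0 Θ1 : V4 → ℂ} {p : V4}
    (h0 : AnalyticAt ℂ Θ0 p) (h1 : AnalyticAt ℂ Θ1 p) (lam : ℂ) (v : V4) :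
    fderiv ℂ (lax1 Θ0 Θ1 lam) p v
      = -(lam • (fderiv ℂ (pd eX Θ1) p v • eY + fderiv ℂ (pd eX Θ0) p v • eX)) := by
  have d1 : HasFDerivAt (fun q => pd eX Θ1 q • eY) ((fderiv ℂ (pd eX Θ1) p).smulRight eY) p :=
    (analyticAt_pd h1 eX).differentiableAt.hasFDerivAt.smul_const eY
  have d0 : HasFDerivAt (fun q => pd eX Θ0 q • eX) ((fderiv ℂ (pd eX Θ0) p).smulRight eX) p :=
    (analyticAt_pd h0 eX).differentiableAt.hasFDerivAt.smul_const eX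
  have dinner : HasFDerivAt (fun q => eZ + pd eX Θ1 q • eY + pd eX Θ0 q • eX)
      (0 + (fderiv ℂ (pd eX Θ1) p).smulRight eY + (fderiv ℂ (pd eX Θ0) p).smulRight eX) p :=
    ((hasFDerivAt_const eZ p).add d1).add d0
  have dL : HasFDerivAt (lax1 Θ0 Θ1 lam)
      (0 - lam • (0 + (fderiv ℂ (pd eX Θ1) p).smulRight eY
        + (fderiv ℂ (pd eX Θ0) p).smulRight eX)) p :=
    (hasFDerivAt_const (-eX) p).sub (dinner.const_smul lam)
  rw [dL.fderiv]
  simp [smul_add]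

lemma bracket_lax {Θ0 Θ1 : V4 → ℂ} {p : V4}
    (h0 : AnalyticAt ℂ Θ0 p) (h1 : AnalyticAt ℂ Θ1 p) (lam : ℂ) :
    bracket (lax0 Θ0 Θ1 lam) (lax1 Θ0 Θ1 lam) p
      = (lam ^ 2 * hhE Θ0 Θ1 Θ0 p) • eX + (lam ^ 2 * hhE Θ0 Θ1 Θ1 p) • eY := by
  have e0 : lax0 Θ0 Θ1 lam p
      = eY - lam • (eW - pd eY Θ1 p • eY - pd eY Θ0 p • eX) := rfl
  have e1 : lax1 Θ0 Θ1 lam p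
      = -eX - lam • (eZ + pd eX Θ1 p • eY + pd eX Θ0 p • eX) := rfl
  show fderiv ℂ (lax1 Θ0 Θ1 lam) p (lax0 Θ0 Θ1 lam p)
      - fderiv ℂ (lax0 Θ0 Θ1 lam) p (lax1 Θ0 Θ1 lam p) = _
  rw [fderiv_lax1_apply h0 h1, fderiv_lax0_apply h0 h1, e0, e1]
  simp only [map_sub, map_add, map_smul, map_neg]
  have r1 : ∀ v w, fderiv ℂ (pd w Θ0) p v = pd v (pd w Θ0) p := fun _ _ => rfl
  have r2 : ∀ v w, fderiv ℂ (pd w Θ1) p v = pd v (pd w Θ1) p := fun _ _ => rfl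
  simp only [r1, r2]
  rw [pd_comm h0 eW eX, pd_comm h0 eZ eY, pd_comm h0 eY eX,
      pd_comm h1 eW eX, pd_comm h1 eZ eY, pd_comm h1 eY eX]
  unfold hhE
  match_scalars <;> · simp only [smul_eq_mul]; ring

/-- for holomorphic `Θ₀, Θ₁` on an open `U ⊆ ℂ⁴`, the Lax pair commutes
on `U` for every `λ ∈ ℂ` iff `(Θ₀, Θ₁)` satisfies the hyper-Hermitian equation
`E₀ = E₁ = 0` on `U`. -/
theorem lax_commutes_iff_hyperHermitian
    (U : Set V4) (hU : IsOpen U) (Θ0 Θ1 : V4 → ℂ)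
    (hΘ0 : ∀ p ∈ U, AnalyticAt ℂ Θ0 p) (hΘ1 : ∀ p ∈ U, AnalyticAt ℂ Θ1 p) :
    (∀ lam : ℂ, ∀ p ∈ U, bracket (lax0 Θ0 Θ1 lam) (lax1 Θ0 Θ1 lam) p = 0) ↔
      (∀ p ∈ U, hhE Θ0 Θ1 Θ0 p = 0 ∧ hhE Θ0 Θ1 Θ1 p = 0) := by
  constructor
  · intro H p hp
    have key := bracket_lax (hΘ0 p hp) (hΘ1 p hp) 1
    rw [H 1 p hp] at key
    have := key.symm
    simpa [eX, eY, Prod.ext_iff] using this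
  · intro H lam p hp
    rw [bracket_lax (hΘ0 p hp) (hΘ1 p hp) lam, (H p hp).1, (H p hp).2]
    simp
end
end

section
/- For arbitrary holomorphic functions Θ₀, Θ₁ on an open set U ⊆ ℂ⁴, the commutator of the two λ-independent tetrad vector fields satisfies the exact identity [∇₀₁′, ∇₁₁′] = E₁·∂/∂y + E₀·∂/∂x on U. In particular [∇₀₁′, ∇₁₁′] = 0 if and only if the pair (Θ₀,Θ₁) satisfies the hyper-Hermitian equation E₀ = E₁ = 0. -/
noncomputable section

lemma pd_analyticAt {f : V4 → ℂ} {p : V4} (h : AnalyticAt ℂ f p) (v : V4) :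
    AnalyticAt ℂ (pd v f) p :=
  ((ContinuousLinearMap.apply ℂ ℂ v).analyticAt _).comp h.fderiv

lemma pd_symm {f : V4 → ℂ} {p : V4} (h : AnalyticAt ℂ f p) (v w : V4) :
    pd v (pd w f) p = pd w (pd v f) p := by
  have hd : DifferentiableAt ℂ (fderiv ℂ f) p := h.fderiv.differentiableAt
  have key : ∀ a b : V4, pd a (pd b f) p = fderiv ℂ (fderiv ℂ f) p a b := by
    intro a b
    have := fderiv_clm_apply (𝕜 := ℂ) hd (differentiableAt_const b)
    show fderiv ℂ (fun q => fderiv ℂ f q b) p a = _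
    rw [show (fun q => fderiv ℂ f q b) = (fun y => (fderiv ℂ f y) b) from rfl, this]
    simp
  rw [key v w, key w v]
  exact (h.contDiffAt.isSymmSndFDerivAt le_top) v w

lemma clm_apply_tuple (L : V4 →L[ℂ] ℂ) (x y w z : ℂ) :
    L (x, y, w, z) = x * L eX + y * L eY + w * L eW + z * L eZ := by
  have h : ((x, y, w, z) : V4) = x • eX + y • eY + w • eW + z • eZ := by
    simp [eX, eY, eW, eZ, Prod.ext_iff]
  rw [h]
  simp [map_add, map_smul, smul_eq_mul]

lemma key_bracket (Θ0 Θ1 : V4 → ℂ) (p : V4)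
    (h0 : AnalyticAt ℂ Θ0 p) (h1 : AnalyticAt ℂ Θ1 p) :
    bracket (nab01 Θ0 Θ1) (nab11 Θ0 Θ1) p
      = hhE Θ0 Θ1 Θ1 p • eY + hhE Θ0 Θ1 Θ0 p • eX := by
  have e01 : nab01 Θ0 Θ1 = fun q => ((-(pd eY Θ0 q), -(pd eY Θ1 q), 1, 0) : V4) := by
    funext q; simp [nab01, eW, eY, eX, Prod.ext_iff]
  have e11 : nab11 Θ0 Θ1 = fun q => ((pd eX Θ0 q, pd eX Θ1 q, 0, 1) : V4) := by
    funext q; simp [nab11, eZ, eY, eX, Prod.ext_iff]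
  have d0X : DifferentiableAt ℂ (pd eX Θ0) p := (pd_analyticAt h0 eX).differentiableAt
  have d1X : DifferentiableAt ℂ (pd eX Θ1) p := (pd_analyticAt h1 eX).differentiableAt
  have d0Y : DifferentiableAt ℂ (pd eY Θ0) p := (pd_analyticAt h0 eY).differentiableAt
  have d1Y : DifferentiableAt ℂ (pd eY Θ1) p := (pd_analyticAt h1 eY).differentiableAt
  set A0 := fderiv ℂ (pd eX Θ0) p
  set A1 := fderiv ℂ (pd eX Θ1) p
  set B0 := fderiv ℂ (pd eY Θ0) p
  set B1 := fderiv ℂ (pd eY Θ1) p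
  have H01 : HasFDerivAt (nab01 Θ0 Θ1)
      ((-B0).prod ((-B1).prod (0 : V4 →L[ℂ] ℂ × ℂ))) p := by
    rw [e01]
    exact HasFDerivAt.prodMk (d0Y.hasFDerivAt.neg)
      (HasFDerivAt.prodMk (d1Y.hasFDerivAt.neg) (hasFDerivAt_const ((1, 0) : ℂ × ℂ) p))
  have H11 : HasFDerivAt (nab11 Θ0 Θ1)
      (A0.prod (A1.prod (0 : V4 →L[ℂ] ℂ × ℂ))) p := by
    rw [e11]
    exact HasFDerivAt.prodMk (d0X.hasFDerivAt)
      (HasFDerivAt.prodMk (d1X.hasFDerivAt) (hasFDerivAt_const ((0, 1) : ℂ × ℂ) p))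
  have f01 := H01.fderiv
  have f11 := H11.fderiv
  set b := pd eY Θ0 p
  set a := pd eY Θ1 p
  set d := pd eX Θ0 p
  set c := pd eX Θ1 p
  have hV : nab01 Θ0 Θ1 p = ((-b, -a, 1, 0) : V4) := by rw [e01]
  have hW : nab11 Θ0 Θ1 p = ((d, c, 0, 1) : V4) := by rw [e11]
  have hA0 : A0 ((-b, -a, 1, 0) : V4)
      = -b * pd eX (pd eX Θ0) p + -a * pd eY (pd eX Θ0) p + pd eW (pd eX Θ0) p := by
    rw [clm_apply_tuple]; simp [A0, pd]
  have hA1 : A1 ((-b, -a, 1, 0) : V4)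
      = -b * pd eX (pd eX Θ1) p + -a * pd eY (pd eX Θ1) p + pd eW (pd eX Θ1) p := by
    rw [clm_apply_tuple]; simp [A1, pd]
  have hB0 : B0 ((d, c, 0, 1) : V4)
      = d * pd eX (pd eY Θ0) p + c * pd eY (pd eY Θ0) p + pd eZ (pd eY Θ0) p := by
    rw [clm_apply_tuple]; simp [B0, pd]
  have hB1 : B1 ((d, c, 0, 1) : V4)
      = d * pd eX (pd eY Θ1) p + c * pd eY (pd eY Θ1) p + pd eZ (pd eY Θ1) p := by
    rw [clm_apply_tuple]; simp [B1, pd]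
  have comp : ∀ C : V4 → ℂ, AnalyticAt ℂ C p →
      (-b * pd eX (pd eX C) p + -a * pd eY (pd eX C) p + pd eW (pd eX C) p)
        + (d * pd eX (pd eY C) p + c * pd eY (pd eY C) p + pd eZ (pd eY C) p)
      = hhE Θ0 Θ1 C p := by
    intro C hC
    rw [pd_symm hC eW eX, pd_symm hC eZ eY, pd_symm hC eY eX]
    show _ = pd eX (pd eW C) p + pd eY (pd eZ C) p
      + (d - a) * pd eX (pd eY C) p + c * pd eY (pd eY C) p - b * pd eX (pd eX C) p
    ring
  show fderiv ℂ (nab11 Θ0 Θ1) p (nab01 Θ0 Θ1 p)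
      - fderiv ℂ (nab01 Θ0 Θ1) p (nab11 Θ0 Θ1 p) = _
  rw [f01, f11, hV, hW]
  have lhs_eq :
      (A0.prod (A1.prod (0 : V4 →L[ℂ] ℂ × ℂ))) ((-b, -a, 1, 0) : V4)
        - ((-B0).prod ((-B1).prod (0 : V4 →L[ℂ] ℂ × ℂ))) ((d, c, 0, 1) : V4)
      = ((A0 ((-b, -a, 1, 0) : V4) + B0 ((d, c, 0, 1) : V4),
          A1 ((-b, -a, 1, 0) : V4) + B1 ((d, c, 0, 1) : V4), 0, 0) : V4) := by
    simp [Prod.ext_iff]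
  rw [lhs_eq, hA0, hA1, hB0, hB1, comp Θ0 h0, comp Θ1 h1]
  simp [eX, eY, Prod.ext_iff]

/-- for arbitrary holomorphic `Θ₀, Θ₁` on an open `U ⊆ ℂ⁴`, the exact
identity `[∇₀₁′, ∇₁₁′] = E₁·∂/∂y + E₀·∂/∂x` holds on `U`; in particular
`[∇₀₁′, ∇₁₁′] = 0` on `U` iff `(Θ₀, Θ₁)` satisfies the hyper-Hermitian equation. -/
theorem bracket_eq3_eq_E
    (U : Set V4) (hU : IsOpen U) (Θ0 Θ1 : V4 → ℂ)
    (hΘ0 : ∀ p ∈ U, AnalyticAt ℂ Θ0 p) (hΘ1 : ∀ p ∈ U, AnalyticAt ℂ Θ1 p) :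
    (∀ p ∈ U,
      bracket (nab01 Θ0 Θ1) (nab11 Θ0 Θ1) p
        = hhE Θ0 Θ1 Θ1 p • eY + hhE Θ0 Θ1 Θ0 p • eX) ∧
    ((∀ p ∈ U, bracket (nab01 Θ0 Θ1) (nab11 Θ0 Θ1) p = 0) ↔
      (∀ p ∈ U, hhE Θ0 Θ1 Θ0 p = 0 ∧ hhE Θ0 Θ1 Θ1 p = 0)) := by
  have main : ∀ p ∈ U, bracket (nab01 Θ0 Θ1) (nab11 Θ0 Θ1) p
      = hhE Θ0 Θ1 Θ1 p • eY + hhE Θ0 Θ1 Θ0 p • eX :=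
    fun p hp => key_bracket Θ0 Θ1 p (hΘ0 p hp) (hΘ1 p hp)
  refine ⟨main, ?_, ?_⟩
  · intro h p hp
    have := (main p hp).symm.trans (h p hp)
    simp [eX, eY, Prod.ext_iff] at this
    exact ⟨this.1, this.2⟩
  · intro h p hp
    rw [main p hp, (h p hp).1, (h p hp).2]
    simp
end
end

section
/- Let F₀, F₁ : V → ℂ be holomorphic on an open set V ⊆ ℂ², write ρ := w·x + y·z, and let U := { (x,y,w,z) ∈ ℂ⁴ : ρ ≠ 0 and (w/ρ, z/ρ) ∈ V }. Define Θ_C(x,y,w,z) := (1/ρ)·F_C(w/ρ, z/ρ) for C ∈ {0,1}. Then on U both the linear part and the nonlinear part of the hyper-Hermitian equation vanish separately: L₀ = L₁ = 0 and N₀ = N₁ = 0; in particular (Θ₀,Θ₁) satisfies the hyper-Hermitian equation E₀ = E₁ = 0 on U. -/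
noncomputable section

/-- Linear part `L_C := ∂²Θ_C/∂x∂w + ∂²Θ_C/∂y∂z` of the hyper-Hermitian expression. -/
def hhL (ΘC : V4 → ℂ) : V4 → ℂ := fun p =>
  pd eX (pd eW ΘC) p + pd eY (pd eZ ΘC) p

/-- Nonlinear part `N_C := E_C − L_C` of the hyper-Hermitian expression. -/
def hhN (Θ0 Θ1 ΘC : V4 → ℂ) : V4 → ℂ := fun p =>
  hhE Θ0 Θ1 ΘC p - hhL ΘC p

/-- `ρ := w·x + y·z` for `p = (x, y, w, z)`. -/
def rho : V4 → ℂ := fun p => p.2.2.1 * p.1 + p.2.1 * p.2.2.2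

namespace HHAux

def qm : V4 → ℂ × ℂ := fun p => (p.2.2.1 / rho p, p.2.2.2 / rho p)

def pa (K : ℂ × ℂ → ℂ) (q : ℂ × ℂ) : ℂ := fderiv ℂ K q (1, 0)
def pb (K : ℂ × ℂ → ℂ) (q : ℂ × ℂ) : ℂ := fderiv ℂ K q (0, 1)

lemma fderiv_pair (K : ℂ × ℂ → ℂ) (q : ℂ × ℂ) (u v : ℂ) :
    fderiv ℂ K q (u, v) = u * pa K q + v * pb K q := by
  have h : (u, v) = u • ((1:ℂ), (0:ℂ)) + v • ((0:ℂ), (1:ℂ)) := by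
    simp [Prod.ext_iff]
  rw [h, map_add, map_smul, map_smul, pa, pb, smul_eq_mul, smul_eq_mul]

lemma master1d (K : ℂ × ℂ → ℂ) (c W Z R : ℂ → ℂ) (c' W' Z' R' t : ℂ) (k : ℕ)
    (hc : HasDerivAt c c' t) (hW : HasDerivAt W W' t) (hZ : HasDerivAt Z Z' t)
    (hR : HasDerivAt R R' t) (hR0 : R t ≠ 0)
    (hK : DifferentiableAt ℂ K (W t / R t, Z t / R t)) :
    HasDerivAt (fun s => c s * ((R s)⁻¹) ^ k * K (W s / R s, Z s / R s))
      ((c' * ((R t)⁻¹) ^ k + c t * ((k : ℂ) * ((R t)⁻¹) ^ (k - 1) * (-R' / (R t) ^ 2)))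
          * K (W t / R t, Z t / R t)
        + c t * ((R t)⁻¹) ^ k *
          ((W' * R t - W t * R') / (R t) ^ 2 * pa K (W t / R t, Z t / R t)
            + (Z' * R t - Z t * R') / (R t) ^ 2 * pb K (W t / R t, Z t / R t))) t := by
  have hq : HasDerivAt (fun s => (W s / R s, Z s / R s))
      ((W' * R t - W t * R') / (R t) ^ 2, (Z' * R t - Z t * R') / (R t) ^ 2) t :=
    HasDerivAt.prodMk (hW.div hR hR0) (hZ.div hR hR0)
  have hKq : HasDerivAt (fun s => K (W s / R s, Z s / R s))
      ((W' * R t - W t * R') / (R t) ^ 2 * pa K (W t / R t, Z t / R t)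
        + (Z' * R t - Z t * R') / (R t) ^ 2 * pb K (W t / R t, Z t / R t)) t := by
    have h2 := hK.hasFDerivAt.comp_hasDerivAt t hq
    rw [fderiv_pair] at h2
    simpa [Function.comp_def] using h2
  exact (hc.mul ((hR.inv hR0).pow k)).mul hKq

lemma pd_eq_line {f : V4 → ℂ} {p v : V4} {m : ℂ}
    (hf : DifferentiableAt ℂ f p)
    (h : HasDerivAt (fun t : ℂ => f (p + t • v)) m 0) : pd v f p = m := by
  have hl : HasDerivAt (fun t : ℂ => p + t • v) v 0 := by
    simpa using ((hasDerivAt_id (0 : ℂ)).smul_const v).const_add p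
  have h3 : HasFDerivAt f (fderiv ℂ f p) ((fun t : ℂ => p + t • v) 0) := by
    simpa using hf.hasFDerivAt
  have h2 : HasDerivAt (fun t : ℂ => f (p + t • v)) (fderiv ℂ f p v) 0 := by
    simpa [Function.comp_def] using h3.comp_hasDerivAt 0 hl
  exact h2.unique h

lemma rho_diff (p : V4) : DifferentiableAt ℂ rho p := by
  unfold rho; fun_prop

lemma qm_diff {p : V4} (h : rho p ≠ 0) : DifferentiableAt ℂ qm p := by
  have h1 : DifferentiableAt ℂ (fun p : V4 => p.2.2.1) p := by fun_prop
  have h2 : DifferentiableAt ℂ (fun p : V4 => p.2.2.2) p := by fun_prop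
  have hr : DifferentiableAt ℂ (fun p : V4 => (rho p)⁻¹) p := (rho_diff p).inv h
  unfold qm
  simp only [div_eq_mul_inv]
  exact DifferentiableAt.prodMk (h1.mul hr) (h2.mul hr)

def Ps (c : V4 → ℂ) (k : ℕ) (K : ℂ × ℂ → ℂ) : V4 → ℂ :=
  fun p => c p * ((rho p)⁻¹) ^ k * K (qm p)

lemma diff_master {K : ℂ × ℂ → ℂ} {c : V4 → ℂ} {p : V4} (k : ℕ)
    (hc : DifferentiableAt ℂ c p) (h0 : rho p ≠ 0) (hK : DifferentiableAt ℂ K (qm p)) :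
    DifferentiableAt ℂ (Ps c k K) p :=
  (hc.mul (((rho_diff p).inv h0).pow k)).mul (hK.comp p (qm_diff h0))

lemma pd_Ps (c : V4 → ℂ) (k : ℕ) (K : ℂ × ℂ → ℂ) (p v : V4) (c' : ℂ)
    (h0 : rho p ≠ 0) (hcd : DifferentiableAt ℂ c p)
    (hc : HasDerivAt (fun t : ℂ => c (p + t • v)) c' 0)
    (hK : DifferentiableAt ℂ K (qm p)) :
    pd v (Ps c k K) p =
      (c' * ((rho p)⁻¹) ^ k + c p * ((k : ℂ) * ((rho p)⁻¹) ^ (k - 1)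
          * (-(v.2.2.1 * p.1 + p.2.2.1 * v.1 + v.2.1 * p.2.2.2 + p.2.1 * v.2.2.2) / (rho p) ^ 2)))
          * K (qm p)
        + c p * ((rho p)⁻¹) ^ k *
          ((v.2.2.1 * rho p - p.2.2.1 * (v.2.2.1 * p.1 + p.2.2.1 * v.1 + v.2.1 * p.2.2.2 + p.2.1 * v.2.2.2)) / (rho p) ^ 2 * pa K (qm p)
            + (v.2.2.2 * rho p - p.2.2.2 * (v.2.2.1 * p.1 + p.2.2.1 * v.1 + v.2.1 * p.2.2.2 + p.2.1 * v.2.2.2)) / (rho p) ^ 2 * pb K (qm p)) := by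
  have hW : HasDerivAt (fun t : ℂ => p.2.2.1 + t * v.2.2.1) v.2.2.1 0 := by
    simpa using ((hasDerivAt_id (0:ℂ)).mul_const v.2.2.1).const_add p.2.2.1
  have hZ : HasDerivAt (fun t : ℂ => p.2.2.2 + t * v.2.2.2) v.2.2.2 0 := by
    simpa using ((hasDerivAt_id (0:ℂ)).mul_const v.2.2.2).const_add p.2.2.2
  have hX : HasDerivAt (fun t : ℂ => p.1 + t * v.1) v.1 0 := by
    simpa using ((hasDerivAt_id (0:ℂ)).mul_const v.1).const_add p.1
  have hY : HasDerivAt (fun t : ℂ => p.2.1 + t * v.2.1) v.2.1 0 := by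
    simpa using ((hasDerivAt_id (0:ℂ)).mul_const v.2.1).const_add p.2.1
  have hR : HasDerivAt
      (fun t : ℂ => (p.2.2.1 + t * v.2.2.1) * (p.1 + t * v.1)
        + (p.2.1 + t * v.2.1) * (p.2.2.2 + t * v.2.2.2))
      (v.2.2.1 * p.1 + p.2.2.1 * v.1 + v.2.1 * p.2.2.2 + p.2.1 * v.2.2.2) 0 := by
    have := (hW.mul hX).add (hY.mul hZ)
    exact this.congr_deriv (by simp only [zero_mul, add_zero]; ring)
  have hR0 : ((p.2.2.1 + (0:ℂ) * v.2.2.1) * (p.1 + (0:ℂ) * v.1)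
        + (p.2.1 + (0:ℂ) * v.2.1) * (p.2.2.2 + (0:ℂ) * v.2.2.2)) ≠ 0 := by
    simpa [rho] using h0
  have hK' : DifferentiableAt ℂ K
      ((p.2.2.1 + (0:ℂ) * v.2.2.1) / ((p.2.2.1 + (0:ℂ) * v.2.2.1) * (p.1 + (0:ℂ) * v.1)
          + (p.2.1 + (0:ℂ) * v.2.1) * (p.2.2.2 + (0:ℂ) * v.2.2.2)),
       (p.2.2.2 + (0:ℂ) * v.2.2.2) / ((p.2.2.1 + (0:ℂ) * v.2.2.1) * (p.1 + (0:ℂ) * v.1)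
          + (p.2.1 + (0:ℂ) * v.2.1) * (p.2.2.2 + (0:ℂ) * v.2.2.2))) := by
    simpa [qm, rho] using hK
  have hm := master1d K (fun t : ℂ => c (p + t • v))
      (fun t : ℂ => p.2.2.1 + t * v.2.2.1) (fun t : ℂ => p.2.2.2 + t * v.2.2.2)
      (fun t : ℂ => (p.2.2.1 + t * v.2.2.1) * (p.1 + t * v.1)
        + (p.2.1 + t * v.2.1) * (p.2.2.2 + t * v.2.2.2))
      c' v.2.2.1 v.2.2.2
      (v.2.2.1 * p.1 + p.2.2.1 * v.1 + v.2.1 * p.2.2.2 + p.2.1 * v.2.2.2) 0 k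
      hc hW hZ hR hR0 hK'
  have hfun : (fun t : ℂ => Ps c k K (p + t • v)) =
      (fun t : ℂ => c (p + t • v)
        * ((((p.2.2.1 + t * v.2.2.1) * (p.1 + t * v.1)
            + (p.2.1 + t * v.2.1) * (p.2.2.2 + t * v.2.2.2)))⁻¹) ^ k
        * K ((p.2.2.1 + t * v.2.2.1) / ((p.2.2.1 + t * v.2.2.1) * (p.1 + t * v.1)
              + (p.2.1 + t * v.2.1) * (p.2.2.2 + t * v.2.2.2)),
             (p.2.2.2 + t * v.2.2.2) / ((p.2.2.1 + t * v.2.2.1) * (p.1 + t * v.1)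
              + (p.2.1 + t * v.2.1) * (p.2.2.2 + t * v.2.2.2)))) := by
    funext t
    simp [Ps, qm, rho]
  beta_reduce at hm
  rw [← hfun] at hm
  have hpd := pd_eq_line (diff_master k hcd h0 hK) hm
  rw [hpd]
  simp [qm, rho]




def Th (F : ℂ × ℂ → ℂ) : V4 → ℂ := fun p => (rho p)⁻¹ * F (qm p)
def GG (F : ℂ × ℂ → ℂ) : ℂ × ℂ → ℂ := fun q => F q + q.1 * pa F q + q.2 * pb F q
def Phx (F : ℂ × ℂ → ℂ) : V4 → ℂ := Ps (fun p => -p.2.2.1) 2 (GG F)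
def Phy (F : ℂ × ℂ → ℂ) : V4 → ℂ := Ps (fun p => -p.2.2.2) 2 (GG F)
def Phw (F : ℂ × ℂ → ℂ) : V4 → ℂ := fun p => Ps (fun p => -p.1) 2 F p
  + (Ps (fun p => p.2.1 * p.2.2.2) 3 (pa F) p + Ps (fun p => -(p.1 * p.2.2.2)) 3 (pb F) p)
def Phz (F : ℂ × ℂ → ℂ) : V4 → ℂ := fun p => Ps (fun p => -p.2.1) 2 F p
  + (Ps (fun p => -(p.2.2.1 * p.2.1)) 3 (pa F) p + Ps (fun p => p.2.2.1 * p.1) 3 (pb F) p)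

def Uset (V : Set (ℂ × ℂ)) : Set V4 := {p | rho p ≠ 0 ∧ qm p ∈ V}

lemma Uopen {V : Set (ℂ × ℂ)} (hV : IsOpen V) : IsOpen (Uset V) := by
  have hrc : Continuous rho := by unfold rho; fun_prop
  have h1 : IsOpen {p : V4 | rho p ≠ 0} := isOpen_compl_singleton.preimage hrc
  have hqc : ContinuousOn qm {p : V4 | rho p ≠ 0} := by
    intro p hp
    have hwc : Continuous fun p : V4 => p.2.2.1 := by fun_prop
    have hzc : Continuous fun p : V4 => p.2.2.2 := by fun_prop
    exact (ContinuousAt.prodMk (hwc.continuousAt.div hrc.continuousAt hp)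
      (hzc.continuousAt.div hrc.continuousAt hp)).continuousWithinAt
  have h2 := hqc.isOpen_inter_preimage h1 hV
  have hset : Uset V = {p : V4 | rho p ≠ 0} ∩ qm ⁻¹' V := rfl
  rw [hset]; exact h2

lemma line_const (c0 : ℂ) (f : V4 → ℂ) (p v : V4)
    (h : (fun t : ℂ => f (p + t • v)) = fun _ => c0) :
    HasDerivAt (fun t : ℂ => f (p + t • v)) 0 0 := by
  rw [h]; exact hasDerivAt_const _ _

lemma pd_congr_ev {f g : V4 → ℂ} {p : V4} (v : V4) (h : f =ᶠ[nhds p] g) :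
    pd v f p = pd v g p := by
  show fderiv ℂ f p v = fderiv ℂ g p v
  rw [h.fderiv_eq]

section PerF
variable {F : ℂ × ℂ → ℂ} {p : V4}

lemma Th_eq_Ps (F : ℂ × ℂ → ℂ) : Th F = Ps (fun _ => (1:ℂ)) 1 F := by
  funext p'; simp [Th, Ps]

lemma pd_Th_x (h0 : rho p ≠ 0) (hK : DifferentiableAt ℂ F (qm p)) :
    pd eX (Th F) p = Phx F p := by
  rw [Th_eq_Ps, pd_Ps _ _ _ _ eX 0 h0 (differentiableAt_const _)
    (hasDerivAt_const 0 1) hK]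
  simp only [Phx, Ps, GG, qm, rho, eX, div_eq_mul_inv, ← inv_pow]
  ring

lemma pd_Th_y (h0 : rho p ≠ 0) (hK : DifferentiableAt ℂ F (qm p)) :
    pd eY (Th F) p = Phy F p := by
  rw [Th_eq_Ps, pd_Ps _ _ _ _ eY 0 h0 (differentiableAt_const _)
    (hasDerivAt_const 0 1) hK]
  simp only [Phy, Ps, GG, qm, rho, eY, div_eq_mul_inv, ← inv_pow]
  ring

lemma pd_Th_w (h0 : rho p ≠ 0) (hK : DifferentiableAt ℂ F (qm p)) :
    pd eW (Th F) p = Phw F p := by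
  rw [Th_eq_Ps, pd_Ps _ _ _ _ eW 0 h0 (differentiableAt_const _)
    (hasDerivAt_const 0 1) hK]
  simp only [Phw, Ps, qm, rho, eW, div_eq_mul_inv, ← inv_pow]
  ring

lemma pd_Th_z (h0 : rho p ≠ 0) (hK : DifferentiableAt ℂ F (qm p)) :
    pd eZ (Th F) p = Phz F p := by
  rw [Th_eq_Ps, pd_Ps _ _ _ _ eZ 0 h0 (differentiableAt_const _)
    (hasDerivAt_const 0 1) hK]
  simp only [Phz, Ps, qm, rho, eZ, div_eq_mul_inv, ← inv_pow]
  ring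

end PerF


section Final
variable {V : Set (ℂ × ℂ)} {F F0 F1 : ℂ × ℂ → ℂ}

lemma GG_diff (hF : ∀ q ∈ V, AnalyticAt ℂ F q) {q0 : ℂ × ℂ} (hq : q0 ∈ V) :
    DifferentiableAt ℂ (GG F) q0 := by
  have hpa : DifferentiableAt ℂ (pa F) q0 :=
    ((hF q0 hq).fderiv.differentiableAt).clm_apply (differentiableAt_const _)
  have hpb : DifferentiableAt ℂ (pb F) q0 :=
    ((hF q0 hq).fderiv.differentiableAt).clm_apply (differentiableAt_const _)
  have h1 : DifferentiableAt ℂ (fun q : ℂ × ℂ => q.1) q0 := by fun_prop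
  have h2 : DifferentiableAt ℂ (fun q : ℂ × ℂ => q.2) q0 := by fun_prop
  exact (((hF q0 hq).differentiableAt).add (h1.mul hpa)).add (h2.mul hpb)

lemma hhL_zero (hV : IsOpen V) (hF : ∀ q ∈ V, AnalyticAt ℂ F q) {p : V4}
    (hp : p ∈ Uset V) : hhL (Th F) p = 0 := by
  obtain ⟨h0, hq⟩ := hp
  have hKF : DifferentiableAt ℂ F (qm p) := (hF _ hq).differentiableAt
  have hpa : DifferentiableAt ℂ (pa F) (qm p) :=
    ((hF _ hq).fderiv.differentiableAt).clm_apply (differentiableAt_const _)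
  have hpb : DifferentiableAt ℂ (pb F) (qm p) :=
    ((hF _ hq).fderiv.differentiableAt).clm_apply (differentiableAt_const _)
  have hmem : Uset V ∈ nhds p := (Uopen hV).mem_nhds ⟨h0, hq⟩
  have hevw : pd eW (Th F) =ᶠ[nhds p] Phw F :=
    Filter.eventuallyEq_of_mem hmem fun p' hp' => pd_Th_w hp'.1 (hF _ hp'.2).differentiableAt
  have hevz : pd eZ (Th F) =ᶠ[nhds p] Phz F :=
    Filter.eventuallyEq_of_mem hmem fun p' hp' => pd_Th_z hp'.1 (hF _ hp'.2).differentiableAt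
  have d1 : DifferentiableAt ℂ (Ps (fun p => -p.1) 2 F) p :=
    diff_master 2 (by fun_prop) h0 hKF
  have d2 : DifferentiableAt ℂ (Ps (fun p => p.2.1 * p.2.2.2) 3 (pa F)) p :=
    diff_master 3 (by fun_prop) h0 hpa
  have d3 : DifferentiableAt ℂ (Ps (fun p => -(p.1 * p.2.2.2)) 3 (pb F)) p :=
    diff_master 3 (by fun_prop) h0 hpb
  have e1 : DifferentiableAt ℂ (Ps (fun p => -p.2.1) 2 F) p :=
    diff_master 2 (by fun_prop) h0 hKF
  have e2 : DifferentiableAt ℂ (Ps (fun p => -(p.2.2.1 * p.2.1)) 3 (pa F)) p :=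
    diff_master 3 (by fun_prop) h0 hpa
  have e3 : DifferentiableAt ℂ (Ps (fun p => p.2.2.1 * p.1) 3 (pb F)) p :=
    diff_master 3 (by fun_prop) h0 hpb
  have hsumw : HasFDerivAt (Phw F)
      (fderiv ℂ (Ps (fun p => -p.1) 2 F) p
        + (fderiv ℂ (Ps (fun p => p.2.1 * p.2.2.2) 3 (pa F)) p
          + fderiv ℂ (Ps (fun p => -(p.1 * p.2.2.2)) 3 (pb F)) p)) p :=
    d1.hasFDerivAt.add (d2.hasFDerivAt.add d3.hasFDerivAt)
  have hsumz : HasFDerivAt (Phz F)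
      (fderiv ℂ (Ps (fun p => -p.2.1) 2 F) p
        + (fderiv ℂ (Ps (fun p => -(p.2.2.1 * p.2.1)) 3 (pa F)) p
          + fderiv ℂ (Ps (fun p => p.2.2.1 * p.1) 3 (pb F)) p)) p :=
    e1.hasFDerivAt.add (e2.hasFDerivAt.add e3.hasFDerivAt)
  have hsplitw : pd eX (Phw F) p = pd eX (Ps (fun p => -p.1) 2 F) p
      + (pd eX (Ps (fun p => p.2.1 * p.2.2.2) 3 (pa F)) p
        + pd eX (Ps (fun p => -(p.1 * p.2.2.2)) 3 (pb F)) p) := by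
    show fderiv ℂ (Phw F) p eX = _
    rw [hsumw.fderiv]; rfl
  have hsplitz : pd eY (Phz F) p = pd eY (Ps (fun p => -p.2.1) 2 F) p
      + (pd eY (Ps (fun p => -(p.2.2.1 * p.2.1)) 3 (pa F)) p
        + pd eY (Ps (fun p => p.2.2.1 * p.1) 3 (pb F)) p) := by
    show fderiv ℂ (Phz F) p eY = _
    rw [hsumz.fderiv]; rfl
  have hc1 : HasDerivAt (fun t : ℂ => -((p + t • eX).1)) (-1) 0 := by
    have h : (fun t : ℂ => -((p + t • eX).1)) = fun t : ℂ => -(p.1 + t) := by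
      funext t; simp [eX]
    rw [h]; exact ((hasDerivAt_id (0:ℂ)).const_add p.1).neg
  have hc2 : HasDerivAt (fun t : ℂ => (p + t • eX).2.1 * (p + t • eX).2.2.2) 0 0 :=
    line_const (p.2.1 * p.2.2.2) (fun p => p.2.1 * p.2.2.2) p eX (by funext t; simp [eX])
  have hc3 : HasDerivAt (fun t : ℂ => -((p + t • eX).1 * (p + t • eX).2.2.2)) (-p.2.2.2) 0 := by
    have h : (fun t : ℂ => -((p + t • eX).1 * (p + t • eX).2.2.2))
        = fun t : ℂ => -((p.1 + t) * p.2.2.2) := by funext t; simp [eX]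
    rw [h]
    exact (((hasDerivAt_id (0:ℂ)).const_add p.1).mul_const p.2.2.2).neg.congr_deriv (by ring)
  have hd1 : HasDerivAt (fun t : ℂ => -((p + t • eY).2.1)) (-1) 0 := by
    have h : (fun t : ℂ => -((p + t • eY).2.1)) = fun t : ℂ => -(p.2.1 + t) := by
      funext t; simp [eY]
    rw [h]; exact ((hasDerivAt_id (0:ℂ)).const_add p.2.1).neg
  have hd2 : HasDerivAt (fun t : ℂ => -((p + t • eY).2.2.1 * (p + t • eY).2.1)) (-p.2.2.1) 0 := by
    have h : (fun t : ℂ => -((p + t • eY).2.2.1 * (p + t • eY).2.1))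
        = fun t : ℂ => -(p.2.2.1 * (p.2.1 + t)) := by funext t; simp [eY]
    rw [h]
    exact (((hasDerivAt_id (0:ℂ)).const_add p.2.1).const_mul p.2.2.1).neg.congr_deriv (by ring)
  have hd3 : HasDerivAt (fun t : ℂ => (p + t • eY).2.2.1 * (p + t • eY).1) 0 0 :=
    line_const (p.2.2.1 * p.1) (fun p => p.2.2.1 * p.1) p eY (by funext t; simp [eY])
  show pd eX (pd eW (Th F)) p + pd eY (pd eZ (Th F)) p = 0
  rw [pd_congr_ev eX hevw, pd_congr_ev eY hevz, hsplitw, hsplitz,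
    pd_Ps (fun p : V4 => -p.1) 2 F p eX (-1) h0 (by fun_prop) hc1 hKF,
    pd_Ps (fun p : V4 => p.2.1 * p.2.2.2) 3 (pa F) p eX 0 h0 (by fun_prop) hc2 hpa,
    pd_Ps (fun p : V4 => -(p.1 * p.2.2.2)) 3 (pb F) p eX (-p.2.2.2) h0 (by fun_prop) hc3 hpb,
    pd_Ps (fun p : V4 => -p.2.1) 2 F p eY (-1) h0 (by fun_prop) hd1 hKF,
    pd_Ps (fun p : V4 => -(p.2.2.1 * p.2.1)) 3 (pa F) p eY (-p.2.2.1) h0 (by fun_prop) hd2 hpa,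
    pd_Ps (fun p : V4 => p.2.2.1 * p.1) 3 (pb F) p eY 0 h0 (by fun_prop) hd3 hpb]
  simp only [qm, rho, eX, eY, div_eq_mul_inv, ← inv_pow]
  have h0' : p.2.2.1 * p.1 + p.2.1 * p.2.2.2 ≠ 0 := by simpa [rho] using h0
  have hinv : (p.2.2.1 * p.1 + p.2.1 * p.2.2.2) * (p.2.2.1 * p.1 + p.2.1 * p.2.2.2)⁻¹ = 1 :=
    mul_inv_cancel₀ h0'
  linear_combination
    (2 * ((p.2.2.1 * p.1 + p.2.1 * p.2.2.2)⁻¹) ^ 2 *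
        F (p.2.2.1 * (p.2.2.1 * p.1 + p.2.1 * p.2.2.2)⁻¹,
           p.2.2.2 * (p.2.2.1 * p.1 + p.2.1 * p.2.2.2)⁻¹)
      + p.2.2.1 * ((p.2.2.1 * p.1 + p.2.1 * p.2.2.2)⁻¹) ^ 3 *
        pa F (p.2.2.1 * (p.2.2.1 * p.1 + p.2.1 * p.2.2.2)⁻¹,
              p.2.2.2 * (p.2.2.1 * p.1 + p.2.1 * p.2.2.2)⁻¹)
      + p.2.2.2 * ((p.2.2.1 * p.1 + p.2.1 * p.2.2.2)⁻¹) ^ 3 *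
        pb F (p.2.2.1 * (p.2.2.1 * p.1 + p.2.1 * p.2.2.2)⁻¹,
              p.2.2.2 * (p.2.2.1 * p.1 + p.2.1 * p.2.2.2)⁻¹)) * hinv

lemma hhN_zero (hV : IsOpen V) (hF0 : ∀ q ∈ V, AnalyticAt ℂ F0 q)
    (hF1 : ∀ q ∈ V, AnalyticAt ℂ F1 q) (hF : ∀ q ∈ V, AnalyticAt ℂ F q)
    {p : V4} (hp : p ∈ Uset V) :
    hhN (Th F0) (Th F1) (Th F) p = 0 := by
  obtain ⟨h0, hq⟩ := hp
  have hG : DifferentiableAt ℂ (GG F) (qm p) := GG_diff hF hq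
  have hmem : Uset V ∈ nhds p := (Uopen hV).mem_nhds ⟨h0, hq⟩
  have hevx : pd eX (Th F) =ᶠ[nhds p] Phx F :=
    Filter.eventuallyEq_of_mem hmem fun p' hp' => pd_Th_x hp'.1 (hF _ hp'.2).differentiableAt
  have hevy : pd eY (Th F) =ᶠ[nhds p] Phy F :=
    Filter.eventuallyEq_of_mem hmem fun p' hp' => pd_Th_y hp'.1 (hF _ hp'.2).differentiableAt
  have c0x := pd_Th_x (F := F0) (p := p) h0 (hF0 _ hq).differentiableAt
  have c0y := pd_Th_y (F := F0) (p := p) h0 (hF0 _ hq).differentiableAt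
  have c1x := pd_Th_x (F := F1) (p := p) h0 (hF1 _ hq).differentiableAt
  have c1y := pd_Th_y (F := F1) (p := p) h0 (hF1 _ hq).differentiableAt
  have ha : HasDerivAt (fun t : ℂ => -((p + t • eX).2.2.1)) 0 0 :=
    line_const (-p.2.2.1) (fun p => -p.2.2.1) p eX (by funext t; simp [eX])
  have hbx : HasDerivAt (fun t : ℂ => -((p + t • eX).2.2.2)) 0 0 :=
    line_const (-p.2.2.2) (fun p => -p.2.2.2) p eX (by funext t; simp [eX])
  have hby : HasDerivAt (fun t : ℂ => -((p + t • eY).2.2.2)) 0 0 :=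
    line_const (-p.2.2.2) (fun p => -p.2.2.2) p eY (by funext t; simp [eY])
  simp only [hhN, hhE, hhL]
  rw [pd_congr_ev eX hevy, pd_congr_ev eY hevy, pd_congr_ev eX hevx,
    c0x, c0y, c1x, c1y]
  simp only [Phx, Phy]
  rw [pd_Ps (fun p : V4 => -p.2.2.2) 2 (GG F) p eX 0 h0 (by fun_prop) hbx hG,
    pd_Ps (fun p : V4 => -p.2.2.2) 2 (GG F) p eY 0 h0 (by fun_prop) hby hG,
    pd_Ps (fun p : V4 => -p.2.2.1) 2 (GG F) p eX 0 h0 (by fun_prop) ha hG]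
  simp only [Ps, GG, qm, rho, eX, eY, div_eq_mul_inv, ← inv_pow]
  ring

end Final

end HHAux

/-- the hyper-Hermitian elementary states
`Θ_C := ρ⁻¹ · F_C(w/ρ, z/ρ)`, built from holomorphic `F₀, F₁` on an open `V ⊆ ℂ²`,
satisfy the linear and the nonlinear part of the hyper-Hermitian equation separately
on `U = {ρ ≠ 0, (w/ρ, z/ρ) ∈ V}`; in particular `E₀ = E₁ = 0` on `U`. -/
theorem elementary_states_solve
    (V : Set (ℂ × ℂ)) (hV : IsOpen V) (F0 F1 : ℂ × ℂ → ℂ)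
    (hF0 : ∀ q ∈ V, AnalyticAt ℂ F0 q) (hF1 : ∀ q ∈ V, AnalyticAt ℂ F1 q) :
    let U : Set V4 := {p | rho p ≠ 0 ∧ (p.2.2.1 / rho p, p.2.2.2 / rho p) ∈ V}
    let Θ0 : V4 → ℂ := fun p => (rho p)⁻¹ * F0 (p.2.2.1 / rho p, p.2.2.2 / rho p)
    let Θ1 : V4 → ℂ := fun p => (rho p)⁻¹ * F1 (p.2.2.1 / rho p, p.2.2.2 / rho p)
    ∀ p ∈ U,
      hhL Θ0 p = 0 ∧ hhL Θ1 p = 0 ∧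
      hhN Θ0 Θ1 Θ0 p = 0 ∧ hhN Θ0 Θ1 Θ1 p = 0 ∧
      hhE Θ0 Θ1 Θ0 p = 0 ∧ hhE Θ0 Θ1 Θ1 p = 0 := by
  intro U Θ0 Θ1 p hp
  have hp' : p ∈ HHAux.Uset V := hp
  have hL0 : hhL Θ0 p = 0 := HHAux.hhL_zero hV hF0 hp'
  have hL1 : hhL Θ1 p = 0 := HHAux.hhL_zero hV hF1 hp'
  have hN0 : hhN Θ0 Θ1 Θ0 p = 0 := HHAux.hhN_zero hV hF0 hF1 hF0 hp'
  have hN1 : hhN Θ0 Θ1 Θ1 p = 0 := HHAux.hhN_zero hV hF0 hF1 hF1 hp'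
  have hE0 : hhE Θ0 Θ1 Θ0 p = 0 := by
    have h : hhE Θ0 Θ1 Θ0 p = hhL Θ0 p + hhN Θ0 Θ1 Θ0 p := by
      simp only [hhN]; ring
    rw [h, hL0, hN0, add_zero]
  have hE1 : hhE Θ0 Θ1 Θ1 p = 0 := by
    have h : hhE Θ0 Θ1 Θ1 p = hhL Θ1 p + hhN Θ0 Θ1 Θ1 p := by
      simp only [hhN]; ring
    rw [h, hL1, hN1, add_zero]
  exact ⟨hL0, hL1, hN0, hN1, hE0, hE1⟩
end
end

section
/- Let a, b ∈ ℂ and k, l, m, n ∈ ℤ, write ρ := w·x + y·z, and let U := { (x,y,w,z) ∈ ℂ⁴ : ρ ≠ 0, w ≠ 0, z ≠ 0 }. Then the pair Θ₀ := a·w^k·z^l·ρ^{−(k+l+1)}, Θ₁ := b·w^m·z^n·ρ^{−(m+n+1)} satisfies the hyper-Hermitian equation E₀ = E₁ = 0 on U, with the linear and nonlinear parts vanishing separately: L₀ = L₁ = 0 and N₀ = N₁ = 0 on U. -/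
noncomputable section

open ContinuousLinearMap

def Lx : V4 →L[ℂ] ℂ := fst ℂ ℂ (ℂ × ℂ × ℂ)
def Ly : V4 →L[ℂ] ℂ := (fst ℂ ℂ (ℂ × ℂ)).comp (snd ℂ ℂ (ℂ × ℂ × ℂ))
def Lw : V4 →L[ℂ] ℂ := ((fst ℂ ℂ ℂ).comp (snd ℂ ℂ (ℂ × ℂ))).comp (snd ℂ ℂ (ℂ × ℂ × ℂ))
def Lz : V4 →L[ℂ] ℂ := ((snd ℂ ℂ ℂ).comp (snd ℂ ℂ (ℂ × ℂ))).comp (snd ℂ ℂ (ℂ × ℂ × ℂ))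

def M (c : ℂ) (e f : ℕ) (i j s : ℤ) : V4 → ℂ := fun p =>
  c * p.1 ^ e * p.2.1 ^ f * p.2.2.1 ^ i * p.2.2.2 ^ j * rho p ^ s

def DM (c : ℂ) (e f : ℕ) (i j s : ℤ) (p : V4) : V4 →L[ℂ] ℂ :=
    (M (c * e) (e - 1) f i j s p + M (c * s) e f (i + 1) j (s - 1) p) • Lx
  + (M (c * f) e (f - 1) i j s p + M (c * s) e f i (j + 1) (s - 1) p) • Ly
  + (M (c * i) e f (i - 1) j s p + M (c * s) (e + 1) f i j (s - 1) p) • Lw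
  + (M (c * j) e f i (j - 1) s p + M (c * s) e (f + 1) i j (s - 1) p) • Lz

lemma hasFDerivAt_rho (p : V4) :
    HasFDerivAt rho (p.2.2.1 • Lx + p.1 • Lw + p.2.1 • Lz + p.2.2.2 • Ly) p := by
  have h1 : HasFDerivAt (fun q : V4 => q.2.2.1 * q.1) (p.2.2.1 • Lx + p.1 • Lw) p :=
    (Lw.hasFDerivAt (x := p)).mul (Lx.hasFDerivAt)
  have h2 : HasFDerivAt (fun q : V4 => q.2.1 * q.2.2.2) (p.2.1 • Lz + p.2.2.2 • Ly) p :=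
    (Ly.hasFDerivAt (x := p)).mul (Lz.hasFDerivAt)
  exact (h1.add h2).congr_fderiv (by abel)

lemma hasFDerivAt_M (c : ℂ) (e f : ℕ) (i j s : ℤ) {p : V4} (hρ : rho p ≠ 0)
    (hw : p.2.2.1 ≠ 0) (hz : p.2.2.2 ≠ 0) :
    HasFDerivAt (M c e f i j s) (DM c e f i j s p) p := by
  have hx : HasFDerivAt (fun q : V4 => q.1 ^ e) ((↑e * p.1 ^ (e - 1)) • Lx) p :=
    (hasDerivAt_pow e p.1).comp_hasFDerivAt p Lx.hasFDerivAt
  have hy : HasFDerivAt (fun q : V4 => q.2.1 ^ f) ((↑f * p.2.1 ^ (f - 1)) • Ly) p :=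
    (hasDerivAt_pow f p.2.1).comp_hasFDerivAt p Ly.hasFDerivAt
  have hwp : HasFDerivAt (fun q : V4 => q.2.2.1 ^ i) ((↑i * p.2.2.1 ^ (i - 1)) • Lw) p :=
    (hasDerivAt_zpow i p.2.2.1 (Or.inl hw)).comp_hasFDerivAt (f := fun q : V4 => q.2.2.1) p Lw.hasFDerivAt
  have hzp : HasFDerivAt (fun q : V4 => q.2.2.2 ^ j) ((↑j * p.2.2.2 ^ (j - 1)) • Lz) p :=
    (hasDerivAt_zpow j p.2.2.2 (Or.inl hz)).comp_hasFDerivAt (f := fun q : V4 => q.2.2.2) p Lz.hasFDerivAt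
  have hrp : HasFDerivAt (fun q : V4 => rho q ^ s)
      ((↑s * rho p ^ (s - 1)) • (p.2.2.1 • Lx + p.1 • Lw + p.2.1 • Lz + p.2.2.2 • Ly)) p :=
    (hasDerivAt_zpow s (rho p) (Or.inl hρ)).comp_hasFDerivAt p (hasFDerivAt_rho p)
  have h := ((((hx.const_mul c).mul hy).mul hwp).mul hzp).mul hrp
  refine h.congr_fderiv ?_
  apply ContinuousLinearMap.ext
  intro v
  simp only [DM, M, ContinuousLinearMap.add_apply, ContinuousLinearMap.smul_apply,
    ContinuousLinearMap.coe_comp', Function.comp_apply, ContinuousLinearMap.coe_fst',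
    ContinuousLinearMap.coe_snd', Lx, Ly, Lw, Lz, smul_eq_mul, Pi.mul_apply]
  rw [zpow_add_one₀ hw, zpow_add_one₀ hz, zpow_sub_one₀ hρ, pow_succ, pow_succ]
  field_simp
  ring

lemma DM_eX (c : ℂ) (e f : ℕ) (i j s : ℤ) (p : V4) :
    DM c e f i j s p eX = M (c * e) (e - 1) f i j s p + M (c * s) e f (i + 1) j (s - 1) p := by
  simp [DM, Lx, Ly, Lw, Lz, eX]

lemma DM_eY (c : ℂ) (e f : ℕ) (i j s : ℤ) (p : V4) :
    DM c e f i j s p eY = M (c * f) e (f - 1) i j s p + M (c * s) e f i (j + 1) (s - 1) p := by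
  simp [DM, Lx, Ly, Lw, Lz, eY]

lemma DM_eW (c : ℂ) (e f : ℕ) (i j s : ℤ) (p : V4) :
    DM c e f i j s p eW = M (c * i) e f (i - 1) j s p + M (c * s) (e + 1) f i j (s - 1) p := by
  simp [DM, Lx, Ly, Lw, Lz, eW]

lemma DM_eZ (c : ℂ) (e f : ℕ) (i j s : ℤ) (p : V4) :
    DM c e f i j s p eZ = M (c * j) e f i (j - 1) s p + M (c * s) e (f + 1) i j (s - 1) p := by
  simp [DM, Lx, Ly, Lw, Lz, eZ]

lemma pd_M (v : V4) (c : ℂ) (e f : ℕ) (i j s : ℤ) {p : V4} (hρ : rho p ≠ 0)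
    (hw : p.2.2.1 ≠ 0) (hz : p.2.2.2 ≠ 0) :
    pd v (M c e f i j s) p = DM c e f i j s p v := by
  unfold pd; rw [(hasFDerivAt_M c e f i j s hρ hw hz).fderiv]

lemma pd_Madd (v : V4) (c₁ : ℂ) (e₁ f₁ : ℕ) (i₁ j₁ s₁ : ℤ) (c₂ : ℂ) (e₂ f₂ : ℕ)
    (i₂ j₂ s₂ : ℤ) {p : V4} (hρ : rho p ≠ 0) (hw : p.2.2.1 ≠ 0) (hz : p.2.2.2 ≠ 0) :
    pd v (fun q => M c₁ e₁ f₁ i₁ j₁ s₁ q + M c₂ e₂ f₂ i₂ j₂ s₂ q) p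
      = DM c₁ e₁ f₁ i₁ j₁ s₁ p v + DM c₂ e₂ f₂ i₂ j₂ s₂ p v := by
  unfold pd
  rw [fderiv_fun_add (hasFDerivAt_M c₁ e₁ f₁ i₁ j₁ s₁ hρ hw hz).differentiableAt
    (hasFDerivAt_M c₂ e₂ f₂ i₂ j₂ s₂ hρ hw hz).differentiableAt,
    (hasFDerivAt_M c₁ e₁ f₁ i₁ j₁ s₁ hρ hw hz).fderiv,
    (hasFDerivAt_M c₂ e₂ f₂ i₂ j₂ s₂ hρ hw hz).fderiv]
  rfl

def Uset : Set V4 := {p | rho p ≠ 0 ∧ p.2.2.1 ≠ 0 ∧ p.2.2.2 ≠ 0}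

lemma isOpen_U : IsOpen Uset := by
  have hc : Continuous rho := by unfold rho; fun_prop
  have h1 : IsOpen {p : V4 | rho p ≠ 0} := isOpen_ne_fun hc continuous_const
  have h2 : IsOpen {p : V4 | p.2.2.1 ≠ 0} :=
    isOpen_ne_fun (by fun_prop) continuous_const
  have h3 : IsOpen {p : V4 | p.2.2.2 ≠ 0} :=
    isOpen_ne_fun (by fun_prop) continuous_const
  exact (h1.inter (h2.inter h3))

lemma pd_congr (v : V4) {f g : V4 → ℂ} {p : V4} (hp : p ∈ Uset)
    (h : ∀ q ∈ Uset, f q = g q) : pd v f p = pd v g p := by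
  unfold pd
  congr 1
  apply Filter.EventuallyEq.fderiv_eq
  filter_upwards [isOpen_U.mem_nhds hp] with q hq using h q hq

lemma hhL_M (c : ℂ) (i j : ℤ) {p : V4} (hp : p ∈ Uset) :
    hhL (M c 0 0 i j (-(i + j + 1))) p = 0 := by
  obtain ⟨hρ, hw, hz⟩ := hp
  generalize hsdef : (-(i + j + 1) : ℤ) = s
  have hW : ∀ q ∈ Uset, pd eW (M c 0 0 i j s) q
      = M (c * i) 0 0 (i - 1) j s q + M (c * s) (0 + 1) 0 i j (s - 1) q := by
    intro q hq
    rw [pd_M eW c 0 0 i j s hq.1 hq.2.1 hq.2.2, DM_eW]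
  have hZ : ∀ q ∈ Uset, pd eZ (M c 0 0 i j s) q
      = M (c * j) 0 0 i (j - 1) s q + M (c * s) 0 (0 + 1) i j (s - 1) q := by
    intro q hq
    rw [pd_M eZ c 0 0 i j s hq.1 hq.2.1 hq.2.2, DM_eZ]
  have hXW : pd eX (pd eW (M c 0 0 i j s)) p
      = DM (c * i) 0 0 (i - 1) j s p eX + DM (c * s) (0 + 1) 0 i j (s - 1) p eX := by
    rw [pd_congr eX ⟨hρ, hw, hz⟩ hW, pd_Madd eX _ _ _ _ _ _ _ _ _ _ _ _ hρ hw hz]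
  have hYZ : pd eY (pd eZ (M c 0 0 i j s)) p
      = DM (c * j) 0 0 i (j - 1) s p eY + DM (c * s) 0 (0 + 1) i j (s - 1) p eY := by
    rw [pd_congr eY ⟨hρ, hw, hz⟩ hZ, pd_Madd eY _ _ _ _ _ _ _ _ _ _ _ _ hρ hw hz]
  rw [hhL, hXW, hYZ, DM_eX, DM_eX, DM_eY, DM_eY]
  simp only [M]
  simp only [zpow_add_one₀ hw, zpow_sub_one₀ hw, zpow_add_one₀ hz, zpow_sub_one₀ hz,
    zpow_sub_one₀ hρ]
  field_simp
  rw [show rho p = p.2.2.1 * p.1 + p.2.1 * p.2.2.2 from rfl, ← hsdef]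
  push_cast
  ring

lemma hhN_eq (Θ0 Θ1 ΘC : V4 → ℂ) (p : V4) :
    hhN Θ0 Θ1 ΘC p
      = (pd eX Θ0 p - pd eY Θ1 p) * pd eX (pd eY ΘC) p
        + pd eX Θ1 p * pd eY (pd eY ΘC) p
        - pd eY Θ0 p * pd eX (pd eX ΘC) p := by
  simp only [hhN, hhE, hhL]; ring

lemma hhN_M (c0 c1 cC : ℂ) (k l m n i j : ℤ) {p : V4} (hp : p ∈ Uset) :
    hhN (M c0 0 0 k l (-(k + l + 1))) (M c1 0 0 m n (-(m + n + 1)))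
      (M cC 0 0 i j (-(i + j + 1))) p = 0 := by
  obtain ⟨hρ, hw, hz⟩ := hp
  generalize hs0 : (-(k + l + 1) : ℤ) = s0
  generalize hs1 : (-(m + n + 1) : ℤ) = s1
  generalize hsC : (-(i + j + 1) : ℤ) = sC
  have hY : ∀ q ∈ Uset, pd eY (M cC 0 0 i j sC) q
      = M (cC * (0 : ℕ)) 0 (0 - 1) i j sC q + M (cC * sC) 0 0 i (j + 1) (sC - 1) q := by
    intro q hq
    rw [pd_M eY cC 0 0 i j sC hq.1 hq.2.1 hq.2.2, DM_eY]
  have hX : ∀ q ∈ Uset, pd eX (M cC 0 0 i j sC) q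
      = M (cC * (0 : ℕ)) (0 - 1) 0 i j sC q + M (cC * sC) 0 0 (i + 1) j (sC - 1) q := by
    intro q hq
    rw [pd_M eX cC 0 0 i j sC hq.1 hq.2.1 hq.2.2, DM_eX]
  have hXY : pd eX (pd eY (M cC 0 0 i j sC)) p
      = DM (cC * (0 : ℕ)) 0 (0 - 1) i j sC p eX + DM (cC * sC) 0 0 i (j + 1) (sC - 1) p eX := by
    rw [pd_congr eX ⟨hρ, hw, hz⟩ hY, pd_Madd eX _ _ _ _ _ _ _ _ _ _ _ _ hρ hw hz]
  have hYY : pd eY (pd eY (M cC 0 0 i j sC)) p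
      = DM (cC * (0 : ℕ)) 0 (0 - 1) i j sC p eY + DM (cC * sC) 0 0 i (j + 1) (sC - 1) p eY := by
    rw [pd_congr eY ⟨hρ, hw, hz⟩ hY, pd_Madd eY _ _ _ _ _ _ _ _ _ _ _ _ hρ hw hz]
  have hXX : pd eX (pd eX (M cC 0 0 i j sC)) p
      = DM (cC * (0 : ℕ)) (0 - 1) 0 i j sC p eX + DM (cC * sC) 0 0 (i + 1) j (sC - 1) p eX := by
    rw [pd_congr eX ⟨hρ, hw, hz⟩ hX, pd_Madd eX _ _ _ _ _ _ _ _ _ _ _ _ hρ hw hz]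
  rw [hhN_eq, hXY, hYY, hXX,
    pd_M eX c0 0 0 k l s0 hρ hw hz,
    pd_M eY c0 0 0 k l s0 hρ hw hz,
    pd_M eX c1 0 0 m n s1 hρ hw hz,
    pd_M eY c1 0 0 m n s1 hρ hw hz]
  simp only [DM_eX, DM_eY]
  simp only [M]
  simp only [zpow_add_one₀ hw, zpow_sub_one₀ hw, zpow_add_one₀ hz, zpow_sub_one₀ hz,
    zpow_sub_one₀ hρ]
  field_simp
  rw [show rho p = p.2.2.1 * p.1 + p.2.1 * p.2.2.2 from rfl, ← hs0, ← hs1, ← hsC]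
  push_cast
  ring


/-- the explicit elementary states
`Θ₀ = a·w^k·z^l·ρ^{−(k+l+1)}`, `Θ₁ = b·w^m·z^n·ρ^{−(m+n+1)}` (integer powers)
satisfy the hyper-Hermitian equation on `{ρ ≠ 0, w ≠ 0, z ≠ 0}`, with the linear
and nonlinear parts vanishing separately. -/
theorem explicit_elementary_states_solve (a b : ℂ) (k l m n : ℤ) :
    let U : Set V4 := {p | rho p ≠ 0 ∧ p.2.2.1 ≠ 0 ∧ p.2.2.2 ≠ 0}
    let Θ0 : V4 → ℂ := fun p => a * p.2.2.1 ^ k * p.2.2.2 ^ l * rho p ^ (-(k + l + 1))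
    let Θ1 : V4 → ℂ := fun p => b * p.2.2.1 ^ m * p.2.2.2 ^ n * rho p ^ (-(m + n + 1))
    ∀ p ∈ U,
      hhL Θ0 p = 0 ∧ hhL Θ1 p = 0 ∧
      hhN Θ0 Θ1 Θ0 p = 0 ∧ hhN Θ0 Θ1 Θ1 p = 0 ∧
      hhE Θ0 Θ1 Θ0 p = 0 ∧ hhE Θ0 Θ1 Θ1 p = 0 := by
  intro U Θ0 Θ1 p hp
  have hpU : p ∈ Uset := hp
  have hΘ0 : Θ0 = M a 0 0 k l (-(k + l + 1)) := by funext q; simp [M, Θ0]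
  have hΘ1 : Θ1 = M b 0 0 m n (-(m + n + 1)) := by funext q; simp [M, Θ1]
  have hL0 : hhL Θ0 p = 0 := by rw [hΘ0]; exact hhL_M a k l hpU
  have hL1 : hhL Θ1 p = 0 := by rw [hΘ1]; exact hhL_M b m n hpU
  have hN0 : hhN Θ0 Θ1 Θ0 p = 0 := by rw [hΘ0, hΘ1]; exact hhN_M a b a k l m n k l hpU
  have hN1 : hhN Θ0 Θ1 Θ1 p = 0 := by rw [hΘ0, hΘ1]; exact hhN_M a b b k l m n m n hpU
  refine ⟨hL0, hL1, hN0, hN1, ?_, ?_⟩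
  · have := hN0; rw [hhN] at this
    have : hhE Θ0 Θ1 Θ0 p = hhL Θ0 p := by linear_combination this
    rw [this, hL0]
  · have := hN1; rw [hhN] at this
    have : hhE Θ0 Θ1 Θ1 p = hhL Θ1 p := by linear_combination this
    rw [this, hL1]
end
end

section
/- Let a ∈ ℂ and k, l ∈ ℤ with k + l ≠ 0, write ρ := w·x + y·z, and let U := { (x,y,w,z) ∈ ℂ⁴ : ρ ≠ 0, w ≠ 0, z ≠ 0 }. Set b := −a, m := k+1, n := l−1, and define Θ₀ := a·w^k·z^l·ρ^{−(k+l+1)} and Θ₁ := b·w^m·z^n·ρ^{−(m+n+1)}. Then on U the divergence condition ∂Θ₀/∂x + ∂Θ₁/∂y = 0 holds, and moreover with Θ := (a/(k+l))·w^k·z^{l−1}·ρ^{−(k+l)} one has Θ₀ = −∂Θ/∂y and Θ₁ = ∂Θ/∂x on U. -/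
noncomputable section

set_option maxHeartbeats 1000000
set_option synthInstance.maxHeartbeats 1000000

namespace ES

def xL : V4 →L[ℂ] ℂ := ContinuousLinearMap.fst ℂ ℂ (ℂ × ℂ × ℂ)
def yL : V4 →L[ℂ] ℂ := (ContinuousLinearMap.fst ℂ ℂ (ℂ × ℂ)).comp (ContinuousLinearMap.snd ℂ ℂ (ℂ × ℂ × ℂ))
def wL : V4 →L[ℂ] ℂ := (ContinuousLinearMap.fst ℂ ℂ ℂ).comp ((ContinuousLinearMap.snd ℂ ℂ (ℂ × ℂ)).comp (ContinuousLinearMap.snd ℂ ℂ (ℂ × ℂ × ℂ)))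
def zL : V4 →L[ℂ] ℂ := (ContinuousLinearMap.snd ℂ ℂ ℂ).comp ((ContinuousLinearMap.snd ℂ ℂ (ℂ × ℂ)).comp (ContinuousLinearMap.snd ℂ ℂ (ℂ × ℂ × ℂ)))

lemma hasFDeriv_mono (c : ℂ) (k l N : ℤ) (p : V4) (hρ : rho p ≠ 0) (hw : p.2.2.1 ≠ 0)
    (hz : p.2.2.2 ≠ 0) :
    HasFDerivAt (fun q : V4 => c * q.2.2.1 ^ k * q.2.2.2 ^ l * rho q ^ N)
      ((c * p.2.2.1 ^ k * p.2.2.2 ^ l) •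
          (((N : ℂ) * rho p ^ (N - 1)) • ((p.2.2.1 • xL + p.1 • wL) + (p.2.1 • zL + p.2.2.2 • yL)))
        + (rho p ^ N) •
          ((c * p.2.2.1 ^ k) • (((l : ℂ) * p.2.2.2 ^ (l - 1)) • zL)
            + p.2.2.2 ^ l • ((fun _ : V4 => c) p • (((k : ℂ) * p.2.2.1 ^ (k - 1)) • wL)
              + p.2.2.1 ^ k • (0 : V4 →L[ℂ] ℂ)))) p := by
  have h1 : HasFDerivAt (fun q : V4 => q.2.2.1 * q.1) (p.2.2.1 • xL + p.1 • wL) p :=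
    (wL.hasFDerivAt).mul (xL.hasFDerivAt)
  have h2 : HasFDerivAt (fun q : V4 => q.2.1 * q.2.2.2) (p.2.1 • zL + p.2.2.2 • yL) p :=
    (yL.hasFDerivAt).mul (zL.hasFDerivAt)
  have hr : HasFDerivAt rho ((p.2.2.1 • xL + p.1 • wL) + (p.2.1 • zL + p.2.2.2 • yL)) p :=
    h1.add h2
  have hpow : HasFDerivAt (fun q : V4 => rho q ^ N)
      (((N : ℂ) * rho p ^ (N - 1)) • ((p.2.2.1 • xL + p.1 • wL) + (p.2.1 • zL + p.2.2.2 • yL))) p :=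
    (hasDerivAt_zpow N (rho p) (Or.inl hρ)).comp_hasFDerivAt p hr
  have hwk : HasFDerivAt (fun q : V4 => q.2.2.1 ^ k) (((k : ℂ) * p.2.2.1 ^ (k - 1)) • wL) p :=
    (hasDerivAt_zpow k (wL p) (Or.inl hw)).comp_hasFDerivAt p wL.hasFDerivAt
  have hzl : HasFDerivAt (fun q : V4 => q.2.2.2 ^ l) (((l : ℂ) * p.2.2.2 ^ (l - 1)) • zL) p :=
    (hasDerivAt_zpow l (zL p) (Or.inl hz)).comp_hasFDerivAt p zL.hasFDerivAt
  exact (((hasFDerivAt_const c p).mul hwk).mul hzl).mul hpow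

lemma pd_eX_mono (c : ℂ) (k l N : ℤ) (p : V4) (hρ : rho p ≠ 0) (hw : p.2.2.1 ≠ 0)
    (hz : p.2.2.2 ≠ 0) :
    pd eX (fun q : V4 => c * q.2.2.1 ^ k * q.2.2.2 ^ l * rho q ^ N) p
      = c * p.2.2.1 ^ k * p.2.2.2 ^ l * ((N : ℂ) * rho p ^ (N - 1)) * p.2.2.1 := by
  have hf := hasFDeriv_mono c k l N p hρ hw hz
  simp only [pd, hf.fderiv]
  simp [xL, yL, wL, zL, eX]
  ring

lemma pd_eY_mono (c : ℂ) (k l N : ℤ) (p : V4) (hρ : rho p ≠ 0) (hw : p.2.2.1 ≠ 0)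
    (hz : p.2.2.2 ≠ 0) :
    pd eY (fun q : V4 => c * q.2.2.1 ^ k * q.2.2.2 ^ l * rho q ^ N) p
      = c * p.2.2.1 ^ k * p.2.2.2 ^ l * ((N : ℂ) * rho p ^ (N - 1)) * p.2.2.2 := by
  have hf := hasFDeriv_mono c k l N p hρ hw hz
  simp only [pd, hf.fderiv]
  simp [xL, yL, wL, zL, eY]
  ring

end ES

/-- with `b = −a`, `m = k+1`, `n = l−1`, the elementary-state pair
`Θ₀ = a·w^k·z^l·ρ^{−(k+l+1)}`, `Θ₁ = b·w^m·z^n·ρ^{−(m+n+1)}` is divergence free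
(`∂Θ₀/∂x + ∂Θ₁/∂y = 0`) and is the gradient pair of the second-heavenly potential
`Θ = (a/(k+l))·w^k·z^{l−1}·ρ^{−(k+l)}` on `{ρ ≠ 0, w ≠ 0, z ≠ 0}`. -/
theorem elementary_states_gradient_pair (a : ℂ) (k l : ℤ) (hkl : k + l ≠ 0) :
    let b : ℂ := -a
    let m : ℤ := k + 1
    let n : ℤ := l - 1
    let U : Set V4 := {p | rho p ≠ 0 ∧ p.2.2.1 ≠ 0 ∧ p.2.2.2 ≠ 0}
    let Θ0 : V4 → ℂ := fun p => a * p.2.2.1 ^ k * p.2.2.2 ^ l * rho p ^ (-(k + l + 1))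
    let Θ1 : V4 → ℂ := fun p => b * p.2.2.1 ^ m * p.2.2.2 ^ n * rho p ^ (-(m + n + 1))
    let Θ : V4 → ℂ := fun p =>
      (a / ((k + l : ℤ) : ℂ)) * p.2.2.1 ^ k * p.2.2.2 ^ (l - 1) * rho p ^ (-(k + l))
    ∀ p ∈ U,
      pd eX Θ0 p + pd eY Θ1 p = 0 ∧
      Θ0 p = -(pd eY Θ p) ∧ Θ1 p = pd eX Θ p := by
  intro b m n U Θ0 Θ1 Θ p hp
  obtain ⟨hρ, hw, hz⟩ := hp
  set w := p.2.2.1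
  set z := p.2.2.2
  have hclC : ((k + l : ℤ) : ℂ) ≠ 0 := by exact_mod_cast fun h => hkl (by exact_mod_cast h)
  have hclC' : (k : ℂ) + l ≠ 0 := by push_cast at hclC; exact hclC
  -- exponent normalizations
  have e1 : -(m + n + 1) = -(k + l + 1) := by simp only [m, n]; ring
  have e2 : -(k + l) - 1 = -(k + l + 1) := by ring
  have hwm : w ^ m = w ^ k * w := by
    simp only [m]; rw [zpow_add_one₀ hw]
  have hzl : z ^ l = z ^ (l - 1) * z := by
    rw [← zpow_add_one₀ hz, sub_add_cancel]
  have h0x := ES.pd_eX_mono a k l (-(k + l + 1)) p hρ hw hz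
  have h1y := ES.pd_eY_mono b m n (-(m + n + 1)) p hρ hw hz
  have hTy := ES.pd_eY_mono (a / ((k + l : ℤ) : ℂ)) k (l - 1) (-(k + l)) p hρ hw hz
  have hTx := ES.pd_eX_mono (a / ((k + l : ℤ) : ℂ)) k (l - 1) (-(k + l)) p hρ hw hz
  refine ⟨?_, ?_, ?_⟩
  · rw [show pd eX Θ0 p = _ from h0x, show pd eY Θ1 p = _ from h1y, e1, hwm, hzl]
    simp only [b]
    push_cast
    ring
  · rw [show pd eY Θ p = _ from hTy, e2]
    show a * w ^ k * z ^ l * rho p ^ (-(k + l + 1)) = _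
    rw [hzl]
    push_cast
    field_simp
    ring
  · rw [show pd eX Θ p = _ from hTx, e2]
    show b * w ^ m * z ^ n * rho p ^ (-(m + n + 1)) = _
    rw [e1, hwm]
    simp only [b, n]
    push_cast
    field_simp
    ring
end
end

section
/- Let c ∈ ℂ and k, l ∈ ℤ with k + l ≠ 0, write ρ := w·x + y·z, and let U := { (x,y,w,z) ∈ ℂ⁴ : ρ ≠ 0, w ≠ 0, z ≠ 0 }. Then Θ := c·w^k·z^{l−1}·ρ^{−(k+l)} satisfies the second Plebanski (heavenly) equation P(Θ) = 0 on U; moreover both parts vanish separately: ∂²Θ/∂x∂w + ∂²Θ/∂y∂z = 0 and (∂²Θ/∂x²)·(∂²Θ/∂y²) − (∂²Θ/∂x∂y)² = 0 on U. -/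
noncomputable section

/-- The second Plebanski expression
`P(Θ) := ∂²Θ/∂x∂w + ∂²Θ/∂y∂z + (∂²Θ/∂x²)(∂²Θ/∂y²) − (∂²Θ/∂x∂y)²`. -/
def pleb (Θ : V4 → ℂ) : V4 → ℂ := fun p =>
  pd eX (pd eW Θ) p + pd eY (pd eZ Θ) p
    + pd eX (pd eX Θ) p * pd eY (pd eY Θ) p
    - (pd eX (pd eY Θ) p) ^ 2

namespace ESaux
open ContinuousLinearMap

def LX : V4 →L[ℂ] ℂ := fst ℂ ℂ (ℂ × ℂ × ℂ)
def LY : V4 →L[ℂ] ℂ := (fst ℂ ℂ (ℂ × ℂ)).comp (snd ℂ ℂ (ℂ × ℂ × ℂ))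
def LW : V4 →L[ℂ] ℂ := ((fst ℂ ℂ ℂ).comp (snd ℂ ℂ (ℂ × ℂ))).comp (snd ℂ ℂ (ℂ × ℂ × ℂ))
def LZ : V4 →L[ℂ] ℂ := ((snd ℂ ℂ ℂ).comp (snd ℂ ℂ (ℂ × ℂ))).comp (snd ℂ ℂ (ℂ × ℂ × ℂ))
lemma hX (p : V4) : HasFDerivAt (fun q : V4 => q.1) LX p := LX.hasFDerivAt
lemma hY (p : V4) : HasFDerivAt (fun q : V4 => q.2.1) LY p := LY.hasFDerivAt
lemma hW (p : V4) : HasFDerivAt (fun q : V4 => q.2.2.1) LW p := LW.hasFDerivAt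
lemma hZ (p : V4) : HasFDerivAt (fun q : V4 => q.2.2.2) LZ p := LZ.hasFDerivAt
lemma hrho (p : V4) : HasFDerivAt rho
    ((p.2.2.1 • LX + p.1 • LW) + (p.2.1 • LZ + p.2.2.2 • LY)) p :=
  ((hW p).mul (hX p)).add ((hY p).mul (hZ p))

/-- The basic building block `w^a · z^b · ρ^e`. -/
def F (a b e : ℤ) : V4 → ℂ := fun p => p.2.2.1 ^ a * p.2.2.2 ^ b * rho p ^ e

lemma hF (a b e : ℤ) {p : V4} (hw : p.2.2.1 ≠ 0) (hz : p.2.2.2 ≠ 0) (hr : rho p ≠ 0) :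
    HasFDerivAt (F a b e)
      ((p.2.2.1 ^ a * p.2.2.2 ^ b) •
          (((e : ℂ) * rho p ^ (e - 1)) • ((p.2.2.1 • LX + p.1 • LW) + (p.2.1 • LZ + p.2.2.2 • LY)))
        + rho p ^ e •
          ((p.2.2.1 ^ a) • (((b : ℂ) * p.2.2.2 ^ (b - 1)) • LZ)
            + (p.2.2.2 ^ b) • (((a : ℂ) * p.2.2.1 ^ (a - 1)) • LW))) p := by
  have hwa : HasFDerivAt (fun q : V4 => q.2.2.1 ^ a) (((a : ℂ) * p.2.2.1 ^ (a - 1)) • LW) p :=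
    (hasDerivAt_zpow a _ (Or.inl hw)).comp_hasFDerivAt (h₂ := fun x : ℂ => x ^ a) p (hW p)
  have hzb : HasFDerivAt (fun q : V4 => q.2.2.2 ^ b) (((b : ℂ) * p.2.2.2 ^ (b - 1)) • LZ) p :=
    (hasDerivAt_zpow b _ (Or.inl hz)).comp_hasFDerivAt (h₂ := fun x : ℂ => x ^ b) p (hZ p)
  have hre : HasFDerivAt (fun q : V4 => rho q ^ e)
      (((e : ℂ) * rho p ^ (e - 1)) • ((p.2.2.1 • LX + p.1 • LW) + (p.2.1 • LZ + p.2.2.2 • LY))) p :=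
    (hasDerivAt_zpow e _ (Or.inl hr)).comp_hasFDerivAt p (hrho p)
  exact (hwa.mul hzb).mul hre

lemma dF (a b e : ℤ) {p : V4} (hw : p.2.2.1 ≠ 0) (hz : p.2.2.2 ≠ 0) (hr : rho p ≠ 0) :
    DifferentiableAt ℂ (F a b e) p := (hF a b e hw hz hr).differentiableAt

lemma pdX_F (a b e : ℤ) {p : V4} (hw : p.2.2.1 ≠ 0) (hz : p.2.2.2 ≠ 0) (hr : rho p ≠ 0) :
    pd eX (F a b e) p = (e : ℂ) * F (a + 1) b (e - 1) p := by
  have h := (hF a b e hw hz hr).fderiv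
  simp only [pd, h]
  simp [LX, LY, LW, LZ, eX, F]
  rw [zpow_add_one₀ hw]
  ring
lemma pdY_F (a b e : ℤ) {p : V4} (hw : p.2.2.1 ≠ 0) (hz : p.2.2.2 ≠ 0) (hr : rho p ≠ 0) :
    pd eY (F a b e) p = (e : ℂ) * F a (b + 1) (e - 1) p := by
  have h := (hF a b e hw hz hr).fderiv
  simp only [pd, h]
  simp [LX, LY, LW, LZ, eY, F]
  rw [zpow_add_one₀ hz]
  ring
lemma pdW_F (a b e : ℤ) {p : V4} (hw : p.2.2.1 ≠ 0) (hz : p.2.2.2 ≠ 0) (hr : rho p ≠ 0) :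
    pd eW (F a b e) p = (a : ℂ) * F (a - 1) b e p + (e : ℂ) * p.1 * F a b (e - 1) p := by
  have h := (hF a b e hw hz hr).fderiv
  simp only [pd, h]
  simp [LX, LY, LW, LZ, eW, F]
  ring
lemma pdZ_F (a b e : ℤ) {p : V4} (hw : p.2.2.1 ≠ 0) (hz : p.2.2.2 ≠ 0) (hr : rho p ≠ 0) :
    pd eZ (F a b e) p = (b : ℂ) * F a (b - 1) e p + (e : ℂ) * p.2.1 * F a b (e - 1) p := by
  have h := (hF a b e hw hz hr).fderiv
  simp only [pd, h]
  simp [LX, LY, LW, LZ, eZ, F]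
  ring

lemma pdX_X_mul_F (a b e : ℤ) {p : V4} (hw : p.2.2.1 ≠ 0) (hz : p.2.2.2 ≠ 0) (hr : rho p ≠ 0) :
    pd eX (fun q => q.1 * F a b e q) p
      = F a b e p + p.1 * ((e : ℂ) * F (a + 1) b (e - 1) p) := by
  have h := HasFDerivAt.fderiv (f := fun q : V4 => q.1 * F a b e q) ((hX p).mul (hF a b e hw hz hr))
  simp only [pd, h]
  simp [LX, LY, LW, LZ, eX, F]
  rw [zpow_add_one₀ hw]
  ring
lemma pdY_Y_mul_F (a b e : ℤ) {p : V4} (hw : p.2.2.1 ≠ 0) (hz : p.2.2.2 ≠ 0) (hr : rho p ≠ 0) :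
    pd eY (fun q => q.2.1 * F a b e q) p
      = F a b e p + p.2.1 * ((e : ℂ) * F a (b + 1) (e - 1) p) := by
  have h := HasFDerivAt.fderiv (f := fun q : V4 => q.2.1 * F a b e q) ((hY p).mul (hF a b e hw hz hr))
  simp only [pd, h]
  simp [LX, LY, LW, LZ, eY, F]
  rw [zpow_add_one₀ hz]
  ring

lemma pd_const_mul (v : V4) {f : V4 → ℂ} {p : V4} (hf : DifferentiableAt ℂ f p) (b : ℂ) :
    pd v (fun q => b * f q) p = b * pd v f p := by
  simp [pd, fderiv_const_mul hf b]
lemma pd_add (v : V4) {f g : V4 → ℂ} {p : V4} (hf : DifferentiableAt ℂ f p)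
    (hg : DifferentiableAt ℂ g p) :
    pd v (fun q => f q + g q) p = pd v f p + pd v g p := by
  simp [pd, fderiv_fun_add hf hg]

lemma pdX_mixed (c1 c2 : ℂ) (a1 b1 e1 a2 b2 e2 : ℤ) {p : V4}
    (hw : p.2.2.1 ≠ 0) (hz : p.2.2.2 ≠ 0) (hr : rho p ≠ 0) :
    pd eX (fun q => c1 * F a1 b1 e1 q + c2 * q.1 * F a2 b2 e2 q) p
      = c1 * ((e1 : ℂ) * F (a1 + 1) b1 (e1 - 1) p)
        + c2 * (F a2 b2 e2 p + p.1 * ((e2 : ℂ) * F (a2 + 1) b2 (e2 - 1) p)) := by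
  have dxf : DifferentiableAt ℂ (fun q : V4 => q.1 * F a2 b2 e2 q) p :=
    ((hX p).differentiableAt).mul (dF a2 b2 e2 hw hz hr)
  have d1 : DifferentiableAt ℂ (fun q : V4 => c1 * F a1 b1 e1 q) p :=
    (dF a1 b1 e1 hw hz hr).const_mul c1
  have d2 : DifferentiableAt ℂ (fun q : V4 => c2 * (q.1 * F a2 b2 e2 q)) p := dxf.const_mul c2
  have hfun : (fun q : V4 => c1 * F a1 b1 e1 q + c2 * q.1 * F a2 b2 e2 q)
      = fun q : V4 => c1 * F a1 b1 e1 q + c2 * (q.1 * F a2 b2 e2 q) := by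
    funext q; ring
  rw [hfun, pd_add eX d1 d2, pd_const_mul eX (dF a1 b1 e1 hw hz hr) c1,
      pd_const_mul eX dxf c2, pdX_F a1 b1 e1 hw hz hr, pdX_X_mul_F a2 b2 e2 hw hz hr]

lemma pdY_mixed (c1 c2 : ℂ) (a1 b1 e1 a2 b2 e2 : ℤ) {p : V4}
    (hw : p.2.2.1 ≠ 0) (hz : p.2.2.2 ≠ 0) (hr : rho p ≠ 0) :
    pd eY (fun q => c1 * F a1 b1 e1 q + c2 * q.2.1 * F a2 b2 e2 q) p
      = c1 * ((e1 : ℂ) * F a1 (b1 + 1) (e1 - 1) p)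
        + c2 * (F a2 b2 e2 p + p.2.1 * ((e2 : ℂ) * F a2 (b2 + 1) (e2 - 1) p)) := by
  have dyf : DifferentiableAt ℂ (fun q : V4 => q.2.1 * F a2 b2 e2 q) p :=
    ((hY p).differentiableAt).mul (dF a2 b2 e2 hw hz hr)
  have d1 : DifferentiableAt ℂ (fun q : V4 => c1 * F a1 b1 e1 q) p :=
    (dF a1 b1 e1 hw hz hr).const_mul c1
  have d2 : DifferentiableAt ℂ (fun q : V4 => c2 * (q.2.1 * F a2 b2 e2 q)) p := dyf.const_mul c2
  have hfun : (fun q : V4 => c1 * F a1 b1 e1 q + c2 * q.2.1 * F a2 b2 e2 q)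
      = fun q : V4 => c1 * F a1 b1 e1 q + c2 * (q.2.1 * F a2 b2 e2 q) := by
    funext q; ring
  rw [hfun, pd_add eY d1 d2, pd_const_mul eY (dF a1 b1 e1 hw hz hr) c1,
      pd_const_mul eY dyf c2, pdY_F a1 b1 e1 hw hz hr, pdY_Y_mul_F a2 b2 e2 hw hz hr]

lemma isOpen_U : IsOpen {p : V4 | rho p ≠ 0 ∧ p.2.2.1 ≠ 0 ∧ p.2.2.2 ≠ 0} := by
  have crho : Continuous rho := by unfold rho; fun_prop
  have h1 : IsOpen {p : V4 | rho p ≠ 0} := isOpen_compl_singleton.preimage crho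
  have h2 : IsOpen {p : V4 | p.2.2.1 ≠ 0} := by
    have : Continuous fun p : V4 => p.2.2.1 := by fun_prop
    exact isOpen_compl_singleton.preimage this
  have h3 : IsOpen {p : V4 | p.2.2.2 ≠ 0} := by
    have : Continuous fun p : V4 => p.2.2.2 := by fun_prop
    exact isOpen_compl_singleton.preimage this
  exact h1.inter (h2.inter h3)

lemma F_collapse (a b e : ℤ) {p : V4} (hw : p.2.2.1 ≠ 0) (hz : p.2.2.2 ≠ 0)
    (hr : rho p ≠ 0) :
    p.1 * F (a + 1) b e p + p.2.1 * F a (b + 1) e p = F a b (e + 1) p := by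
  simp only [F]
  rw [zpow_add_one₀ hw, zpow_add_one₀ hz, zpow_add_one₀ hr]
  simp only [rho]
  ring

lemma F_mul (a1 b1 a2 b2 e : ℤ) {p : V4} (hw : p.2.2.1 ≠ 0) (hz : p.2.2.2 ≠ 0)
    (hr : rho p ≠ 0) :
    F a1 b1 e p * F a2 b2 e p = F (a1 + a2) (b1 + b2) (e + e) p := by
  simp only [F]
  rw [zpow_add₀ hw, zpow_add₀ hz, zpow_add₀ hr]
  ring

end ESaux

/-- `Θ = c·w^k·z^{l−1}·ρ^{−(k+l)}` (with `k + l ≠ 0`) satisfies the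
second Plebanski equation `P(Θ) = 0` on `{ρ ≠ 0, w ≠ 0, z ≠ 0}`; moreover the linear
and quadratic parts of `P(Θ)` vanish separately. -/



theorem elementary_state_plebanski_potential (c : ℂ) (k l : ℤ) (hkl : k + l ≠ 0) :
    let U : Set V4 := {p | rho p ≠ 0 ∧ p.2.2.1 ≠ 0 ∧ p.2.2.2 ≠ 0}
    let Θ : V4 → ℂ := fun p => c * p.2.2.1 ^ k * p.2.2.2 ^ (l - 1) * rho p ^ (-(k + l))
    ∀ p ∈ U,
      pleb Θ p = 0 ∧
      pd eX (pd eW Θ) p + pd eY (pd eZ Θ) p = 0 ∧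
      pd eX (pd eX Θ) p * pd eY (pd eY Θ) p - (pd eX (pd eY Θ) p) ^ 2 = 0 := by
  intro U Θ p hp
  obtain ⟨hr, hw, hz⟩ := hp
  open ESaux in
  have hmem : {q : V4 | rho q ≠ 0 ∧ q.2.2.1 ≠ 0 ∧ q.2.2.2 ≠ 0} ∈ nhds p :=
    ESaux.isOpen_U.mem_nhds ⟨hr, hw, hz⟩
  have hΘ : Θ = fun q => c * ESaux.F k (l - 1) (-(k + l)) q := by
    funext q; simp only [ESaux.F]; ring
  -- first derivatives on U
  have eqW : Set.EqOn (pd eW Θ)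
      (fun q => c * (k : ℂ) * ESaux.F (k - 1) (l - 1) (-(k + l)) q
        + c * ((-(k + l) : ℤ) : ℂ) * q.1 * ESaux.F k (l - 1) (-(k + l) - 1) q)
      {q : V4 | rho q ≠ 0 ∧ q.2.2.1 ≠ 0 ∧ q.2.2.2 ≠ 0} := by
    rintro q ⟨hr', hw', hz'⟩
    rw [hΘ, ESaux.pd_const_mul eW (ESaux.dF _ _ _ hw' hz' hr') c,
      ESaux.pdW_F _ _ _ hw' hz' hr']
    ring
  have eqZ : Set.EqOn (pd eZ Θ)
      (fun q => c * ((l - 1 : ℤ) : ℂ) * ESaux.F k (l - 1 - 1) (-(k + l)) q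
        + c * ((-(k + l) : ℤ) : ℂ) * q.2.1 * ESaux.F k (l - 1) (-(k + l) - 1) q)
      {q : V4 | rho q ≠ 0 ∧ q.2.2.1 ≠ 0 ∧ q.2.2.2 ≠ 0} := by
    rintro q ⟨hr', hw', hz'⟩
    rw [hΘ, ESaux.pd_const_mul eZ (ESaux.dF _ _ _ hw' hz' hr') c,
      ESaux.pdZ_F _ _ _ hw' hz' hr']
    ring
  have eqX : Set.EqOn (pd eX Θ)
      (fun q => (c * ((-(k + l) : ℤ) : ℂ)) * ESaux.F (k + 1) (l - 1) (-(k + l) - 1) q)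
      {q : V4 | rho q ≠ 0 ∧ q.2.2.1 ≠ 0 ∧ q.2.2.2 ≠ 0} := by
    rintro q ⟨hr', hw', hz'⟩
    rw [hΘ, ESaux.pd_const_mul eX (ESaux.dF _ _ _ hw' hz' hr') c,
      ESaux.pdX_F _ _ _ hw' hz' hr']
    ring
  have eqY : Set.EqOn (pd eY Θ)
      (fun q => (c * ((-(k + l) : ℤ) : ℂ)) * ESaux.F k (l - 1 + 1) (-(k + l) - 1) q)
      {q : V4 | rho q ≠ 0 ∧ q.2.2.1 ≠ 0 ∧ q.2.2.2 ≠ 0} := by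
    rintro q ⟨hr', hw', hz'⟩
    rw [hΘ, ESaux.pd_const_mul eY (ESaux.dF _ _ _ hw' hz' hr') c,
      ESaux.pdY_F _ _ _ hw' hz' hr']
    ring
  -- second derivatives at p
  have hXW : pd eX (pd eW Θ) p
      = c * (k : ℂ) * (((-(k + l) : ℤ) : ℂ) * ESaux.F (k - 1 + 1) (l - 1) (-(k + l) - 1) p)
        + c * ((-(k + l) : ℤ) : ℂ) * (ESaux.F k (l - 1) (-(k + l) - 1) p
          + p.1 * (((-(k + l) - 1 : ℤ) : ℂ) * ESaux.F (k + 1) (l - 1) (-(k + l) - 1 - 1) p)) := by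
    have hev := Filter.eventuallyEq_of_mem hmem eqW
    show fderiv ℂ (pd eW Θ) p eX = _
    rw [hev.fderiv_eq]
    exact ESaux.pdX_mixed _ _ _ _ _ _ _ _ hw hz hr
  have hYZ : pd eY (pd eZ Θ) p
      = c * ((l - 1 : ℤ) : ℂ) * (((-(k + l) : ℤ) : ℂ) * ESaux.F k (l - 1 - 1 + 1) (-(k + l) - 1) p)
        + c * ((-(k + l) : ℤ) : ℂ) * (ESaux.F k (l - 1) (-(k + l) - 1) p
          + p.2.1 * (((-(k + l) - 1 : ℤ) : ℂ) * ESaux.F k (l - 1 + 1) (-(k + l) - 1 - 1) p)) := by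
    have hev := Filter.eventuallyEq_of_mem hmem eqZ
    show fderiv ℂ (pd eZ Θ) p eY = _
    rw [hev.fderiv_eq]
    exact ESaux.pdY_mixed _ _ _ _ _ _ _ _ hw hz hr
  have hXX : pd eX (pd eX Θ) p
      = (c * ((-(k + l) : ℤ) : ℂ)) * (((-(k + l) - 1 : ℤ) : ℂ)
          * ESaux.F (k + 1 + 1) (l - 1) (-(k + l) - 1 - 1) p) := by
    have hev := Filter.eventuallyEq_of_mem hmem eqX
    show fderiv ℂ (pd eX Θ) p eX = _
    rw [hev.fderiv_eq]
    exact (ESaux.pd_const_mul eX (ESaux.dF _ _ _ hw hz hr) _).trans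
      (by rw [ESaux.pdX_F _ _ _ hw hz hr])
  have hYY : pd eY (pd eY Θ) p
      = (c * ((-(k + l) : ℤ) : ℂ)) * (((-(k + l) - 1 : ℤ) : ℂ)
          * ESaux.F k (l - 1 + 1 + 1) (-(k + l) - 1 - 1) p) := by
    have hev := Filter.eventuallyEq_of_mem hmem eqY
    show fderiv ℂ (pd eY Θ) p eY = _
    rw [hev.fderiv_eq]
    exact (ESaux.pd_const_mul eY (ESaux.dF _ _ _ hw hz hr) _).trans
      (by rw [ESaux.pdY_F _ _ _ hw hz hr])
  have hXY : pd eX (pd eY Θ) p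
      = (c * ((-(k + l) : ℤ) : ℂ)) * (((-(k + l) - 1 : ℤ) : ℂ)
          * ESaux.F (k + 1) (l - 1 + 1) (-(k + l) - 1 - 1) p) := by
    have hev := Filter.eventuallyEq_of_mem hmem eqY
    show fderiv ℂ (pd eY Θ) p eX = _
    rw [hev.fderiv_eq]
    exact (ESaux.pd_const_mul eX (ESaux.dF _ _ _ hw hz hr) _).trans
      (by rw [ESaux.pdX_F _ _ _ hw hz hr])
  have hr' : p.2.2.1 * p.1 + p.2.1 * p.2.2.2 ≠ 0 := hr
  have i1 : k - 1 + 1 = k := by ring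
  have i2 : l - 1 - 1 + 1 = l - 1 := by ring
  have hLin : pd eX (pd eW Θ) p + pd eY (pd eZ Θ) p = 0 := by
    rw [hXW, hYZ, i1, i2]
    have hc := ESaux.F_collapse k (l - 1) (-(k + l) - 1 - 1) hw hz hr
    have i3 : -(k + l) - 1 - 1 + 1 = -(k + l) - 1 := by ring
    rw [i3] at hc
    push_cast at hc ⊢
    linear_combination (c * (-(↑k + ↑l)) * (-(↑k + ↑l) - 1)) * hc
  have hQuad : pd eX (pd eX Θ) p * pd eY (pd eY Θ) p - (pd eX (pd eY Θ) p) ^ 2 = 0 := by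
    rw [hXX, hYY, hXY]
    have h1 := ESaux.F_mul (k + 1 + 1) (l - 1) k (l - 1 + 1 + 1) (-(k + l) - 1 - 1) hw hz hr
    have h2 := ESaux.F_mul (k + 1) (l - 1 + 1) (k + 1) (l - 1 + 1) (-(k + l) - 1 - 1) hw hz hr
    have i4 : k + 1 + 1 + k = k + 1 + (k + 1) := by ring
    have i5 : l - 1 + (l - 1 + 1 + 1) = l - 1 + 1 + (l - 1 + 1) := by ring
    rw [i4, i5] at h1
    push_cast at h1 h2 ⊢
    linear_combination (c * (-(↑k + ↑l)) * (-(↑k + ↑l) - 1)) ^ 2 * h1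
      - (c * (-(↑k + ↑l)) * (-(↑k + ↑l) - 1)) ^ 2 * h2
  refine ⟨?_, hLin, hQuad⟩
  simp only [pleb]
  linear_combination hLin + hQuad
end
end
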